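/- arXiv:1603.02648 — 8 statements merged into one kernel-verified Lean document; each statement's English description precedes it below -/
import Mathlib

section
/- Let V : ℝ → Mat_{n×n}(ℝ) be continuous, let λ ∈ ℝ, and let α₁, α₂ be real n×n matrices such that α₁ᵗv = 0 and α₂ᵗv = 0 together imply v = 0 (i.e. the n×2n matrix [α₁ α₂] has rank n). Suppose X, Z : [0,1] → Mat_{n×n}(ℝ) are differentiable and satisfy X′(s) = Z(s) and Z′(s) = (V(s) − λIₙ)X(s) for all s ∈ [0,1], with X(0) = α₂ᵗ and Z(0) = −α₁ᵗ. Then for every s ∈ [0,1] and v ∈ ℝⁿ, if X(s)v = 0 and Z(s)v = 0 then v = 0; i.e. the 2n×n frame (X(s); Z(s)) has rank n for every s. -/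
open Matrix

/-- If `X, Z` solve the first-order (shooting) system `X′ = Z`, `Z′ = (V − λI)X` on `[0,1]`
with `V` continuous, and the initial frame `(α₂ᵗ; −α₁ᵗ)` has rank `n` (i.e. `α₁ᵗv = 0` and
`α₂ᵗv = 0` imply `v = 0`), then the frame `(X(s); Z(s))` has rank `n` for every `s ∈ [0,1]`:
`X(s)v = 0` and `Z(s)v = 0` imply `v = 0`. -/
theorem frame_has_full_rank (n : ℕ) (V : ℝ → Matrix (Fin n) (Fin n) ℝ) (lam : ℝ)
    (hVcont : ∀ i j, Continuous fun x => V x i j)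
    (α₁ α₂ : Matrix (Fin n) (Fin n) ℝ)
    (hrank : ∀ v : Fin n → ℝ, α₁ᵀ *ᵥ v = 0 → α₂ᵀ *ᵥ v = 0 → v = 0)
    (X Z : ℝ → Matrix (Fin n) (Fin n) ℝ)
    (hX : ∀ s ∈ Set.Icc (0:ℝ) 1, ∀ i j,
      HasDerivWithinAt (fun t => X t i j) (Z s i j) (Set.Icc (0:ℝ) 1) s)
    (hZ : ∀ s ∈ Set.Icc (0:ℝ) 1, ∀ i j,
      HasDerivWithinAt (fun t => Z t i j)
        (((V s - lam • (1 : Matrix (Fin n) (Fin n) ℝ)) * X s) i j) (Set.Icc (0:ℝ) 1) s)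
    (hX0 : X 0 = α₂ᵀ) (hZ0 : Z 0 = -α₁ᵀ) :
    ∀ s ∈ Set.Icc (0:ℝ) 1, ∀ v : Fin n → ℝ,
      X s *ᵥ v = 0 → Z s *ᵥ v = 0 → v = 0 := by
  intro s hs v hXv hZv
  set A : ℝ → Matrix (Fin n) (Fin n) ℝ :=
    fun t => V t - lam • (1 : Matrix (Fin n) (Fin n) ℝ) with hAdef
  -- uniform bound on entries of A on [0,1]
  have hAcont : ∀ i j, Continuous fun t => A t i j := by
    intro i j
    simpa [hAdef, Matrix.sub_apply] using (show Continuous fun x => V x i j - lam * (1 : Matrix (Fin n) (Fin n) ℝ) i j from (hVcont i j).sub continuous_const)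
  obtain ⟨C, hC⟩ : ∃ C, ∀ t ∈ Set.Icc (0:ℝ) 1,
      ‖∑ p : Fin n × Fin n, |A t p.1 p.2|‖ ≤ C := by
    apply (isCompact_Icc).exists_bound_of_continuousOn
    exact (continuous_finset_sum _ fun p _ => (hAcont p.1 p.2).abs).continuousOn
  have hCbd : ∀ t ∈ Set.Icc (0:ℝ) 1, ∀ i j, |A t i j| ≤ C := by
    intro t ht i j
    have h1 : |A t i j| ≤ ∑ p : Fin n × Fin n, |A t p.1 p.2| :=
      Finset.single_le_sum (f := fun p : Fin n × Fin n => |A t p.1 p.2|)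
        (fun p _ => abs_nonneg _) (Finset.mem_univ (i, j))
    have h2 := hC t ht
    rw [Real.norm_eq_abs] at h2
    exact h1.trans ((le_abs_self _).trans h2)
  have hC0 : (0:ℝ) ≤ C := le_trans (norm_nonneg _) (hC 0 (by norm_num))
  -- projection onto [0,1]
  set π : ℝ → ℝ := fun t => max 0 (min 1 t) with hπdef
  have hπmem : ∀ t, π t ∈ Set.Icc (0:ℝ) 1 :=
    fun t => ⟨le_max_left _ _, max_le (by norm_num) (min_le_left _ _)⟩
  have hπid : ∀ t ∈ Set.Icc (0:ℝ) 1, π t = t := by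
    intro t ht
    simp [hπdef, min_eq_right ht.2, max_eq_right ht.1]
  -- bound on mulVec
  have hmulVec : ∀ t ∈ Set.Icc (0:ℝ) 1, ∀ u : Fin n → ℝ,
      ‖A t *ᵥ u‖ ≤ (n * C) * ‖u‖ := by
    intro t ht u
    have hnn : (0:ℝ) ≤ (n * C) * ‖u‖ := by positivity
    rw [pi_norm_le_iff_of_nonneg hnn]
    intro i
    have : ‖(A t *ᵥ u) i‖ = |∑ j, A t i j * u j| := by
      simp [Matrix.mulVec, dotProduct, Real.norm_eq_abs]
    rw [this]
    calc |∑ j, A t i j * u j| ≤ ∑ j, |A t i j * u j| := Finset.abs_sum_le_sum_abs _ _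
      _ ≤ ∑ _j : Fin n, C * ‖u‖ := by
          apply Finset.sum_le_sum
          intro j _
          rw [abs_mul]
          exact mul_le_mul (hCbd t ht i j) ((Real.norm_eq_abs (u j)) ▸ norm_le_pi_norm u j)
            (abs_nonneg _) hC0
      _ = (n * C) * ‖u‖ := by simp [mul_assoc]
  -- the vector field
  set w : ℝ → (Fin n → ℝ) × (Fin n → ℝ) → (Fin n → ℝ) × (Fin n → ℝ) :=
    fun t p => (p.2, A (π t) *ᵥ p.1) with hwdef
  set K : NNReal := Real.toNNReal (max 1 (n * C)) with hKdef
  have hKge : max (1:ℝ) (n*C) ≤ (K : ℝ) := by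
    rw [hKdef, Real.coe_toNNReal _ (le_trans zero_le_one (le_max_left _ _))]
  have hlip : ∀ t, LipschitzWith K (w t) := by
    intro t
    rw [lipschitzWith_iff_dist_le_mul]
    intro p q
    rw [Prod.dist_eq]
    apply max_le
    · calc dist p.2 q.2 ≤ dist p q := le_max_right _ _
        _ ≤ K * dist p q := le_mul_of_one_le_left dist_nonneg
            (le_trans (le_max_left _ _) hKge)
    · have : dist (A (π t) *ᵥ p.1) (A (π t) *ᵥ q.1) = ‖A (π t) *ᵥ (p.1 - q.1)‖ := by
        rw [dist_eq_norm, ← Matrix.mulVec_sub]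
      rw [this]
      calc ‖A (π t) *ᵥ (p.1 - q.1)‖ ≤ (n * C) * ‖p.1 - q.1‖ :=
            hmulVec _ (hπmem t) _
        _ ≤ K * dist p q := by
            rw [← dist_eq_norm]
            apply mul_le_mul (le_trans (le_max_right _ _) hKge) (le_max_left _ _)
              dist_nonneg (NNReal.coe_nonneg K)
  -- the solution curve
  set f : ℝ → (Fin n → ℝ) × (Fin n → ℝ) := fun t => (X t *ᵥ v, Z t *ᵥ v) with hfdef
  have hf' : ∀ t ∈ Set.Icc (0:ℝ) 1,
      HasDerivWithinAt f (w t (f t)) (Set.Icc (0:ℝ) 1) t := by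
    intro t ht
    apply HasDerivWithinAt.prodMk
    · -- first component, derivative Z t *ᵥ v
      have : HasDerivWithinAt (fun τ => X τ *ᵥ v) (Z t *ᵥ v) (Set.Icc (0:ℝ) 1) t := by
        rw [hasDerivWithinAt_pi]
        intro i
        have : HasDerivWithinAt (fun τ => ∑ j, X τ i j * v j)
            (∑ j, Z t i j * v j) (Set.Icc (0:ℝ) 1) t :=
          HasDerivWithinAt.fun_sum fun j _ => (hX t ht i j).mul_const (v j)
        simpa [Matrix.mulVec, dotProduct] using this
      simpa [hwdef] using this
    · have : HasDerivWithinAt (fun τ => Z τ *ᵥ v) ((A t * X t) *ᵥ v) (Set.Icc (0:ℝ) 1) t := by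
        rw [hasDerivWithinAt_pi]
        intro i
        have : HasDerivWithinAt (fun τ => ∑ j, Z τ i j * v j)
            (∑ j, (A t * X t) i j * v j) (Set.Icc (0:ℝ) 1) t :=
          HasDerivWithinAt.fun_sum fun j _ => (hZ t ht i j).mul_const (v j)
        simpa [Matrix.mulVec, dotProduct] using this
      have heq : (A t * X t) *ᵥ v = A (π t) *ᵥ (X t *ᵥ v) := by
        rw [hπid t ht, ← Matrix.mulVec_mulVec]
      rw [heq] at this
      simpa [hwdef, hfdef] using this
  have hfc : ContinuousOn f (Set.Icc (0:ℝ) 1) := fun t ht =>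
    ((hf' t ht).continuousWithinAt : ContinuousWithinAt f _ t)
  -- uniqueness backwards from s
  have key : Set.EqOn f (fun _ => (0, 0)) (Set.Icc 0 s) := by
    apply ODE_solution_unique_of_mem_Icc_left
      (v := w) (K := K) (s := fun _ => Set.univ)
      (fun t _ => (hlip t).lipschitzOnWith)
    · exact hfc.mono (Set.Icc_subset_Icc le_rfl hs.2)
    · intro t ht
      have ht01 : t ∈ Set.Icc (0:ℝ) 1 := ⟨le_of_lt ht.1, le_trans ht.2 hs.2⟩
      apply (hf' t ht01).mono_of_mem_nhdsWithin
      have h1 : Set.Ioi (0:ℝ) ∈ nhds t := Ioi_mem_nhds ht.1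
      have h2 : Set.Iic t ∩ Set.Ioi (0:ℝ) ∈ nhdsWithin t (Set.Iic t) :=
        Filter.inter_mem self_mem_nhdsWithin (nhdsWithin_le_nhds h1)
      apply Filter.mem_of_superset h2
      intro x hx
      exact ⟨le_of_lt hx.2, le_trans hx.1 ht01.2⟩
    · intro t _; exact Set.mem_univ _
    · exact continuousOn_const
    · intro t ht
      have : w t (0, 0) = (0, 0) := by
        simp [hwdef]
      rw [this]
      exact hasDerivWithinAt_const _ _ _
    · intro t _; exact Set.mem_univ _
    · simp [hfdef, hXv, hZv, Prod.ext_iff]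
  have h0 : f 0 = (0, 0) := key ⟨le_rfl, hs.1⟩
  rw [hfdef] at h0
  have hx0 : X 0 *ᵥ v = 0 := congrArg Prod.fst h0
  have hz0 : Z 0 *ᵥ v = 0 := congrArg Prod.snd h0
  rw [hX0] at hx0
  rw [hZ0] at hz0
  apply hrank v _ hx0
  have : -(α₁ᵀ *ᵥ v) = 0 := by rw [← Matrix.neg_mulVec]; exact hz0
  exact neg_eq_zero.mp this
end

section
/- Let X, Z be real n×n matrices satisfying the Lagrangian frame conditions, let 𝕊 := (XᵗX + ZᵗZ)^{−1/2}, and let β₁, β₂ satisfy the β-conditions. Define the 2n×2n matrices 𝓧_D = [[X𝕊, −Z𝕊],[Z𝕊, X𝕊]] and 𝓑 = [[β₁, β₂],[−β₂, β₁]], and set Q = 𝓧_D𝓑. Then QᵗQ = QQᵗ = I_{2n}, QJ = JQ, and for every x ∈ ℝⁿ one has Q·(β₁ᵗx, β₂ᵗx)ᵀ = (Xy, Zy)ᵀ where y = 𝕊x; in particular Q maps the column span of the frame (β₁ᵗ; β₂ᵗ) onto the column span of the frame (X; Z). -/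
open Matrix

/-- The standard symplectic matrix `J = [[0, −Iₙ],[Iₙ, 0]]` on `ℝ^{2n}`. -/
def Jmat (n : ℕ) : Matrix (Fin n ⊕ Fin n) (Fin n ⊕ Fin n) ℝ :=
  fromBlocks 0 (-1) 1 0

lemma commJ {n : ℕ} (a b : Matrix (Fin n) (Fin n) ℝ) :
    fromBlocks a b (-b) a * Jmat n = Jmat n * fromBlocks a b (-b) a := by
  simp [Jmat, fromBlocks_multiply]

/-- Let `(X; Z)` be a Lagrangian frame, let `S` be the positive definite square root of
`𝕏 = XᵗX + ZᵗZ` (so `𝕊 = 𝕏^{−1/2} = S⁻¹`), and let `β₁, β₂` satisfy the β-conditions.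
Then `Q = 𝓧_D 𝓑` (with `𝓧_D = [[X𝕊, −Z𝕊],[Z𝕊, X𝕊]]` and `𝓑 = [[β₁, β₂],[−β₂, β₁]]`)
is orthogonal, commutes with `J`, and maps the frame `(β₁ᵗ; β₂ᵗ)` onto the frame `(X; Z)`:
`Q (β₁ᵗx, β₂ᵗx)ᵀ = (Xy, Zy)ᵀ` with `y = 𝕊x`. -/
theorem XD_times_B_unitary (n : ℕ) (X Z β₁ β₂ S : Matrix (Fin n) (Fin n) ℝ)
    (hfr : Xᵀ * Z = Zᵀ * X)
    (hβ1 : β₁ * β₂ᵀ = β₂ * β₁ᵀ) (hβ2 : β₁ * β₁ᵀ + β₂ * β₂ᵀ = 1)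
    (hS : S.PosDef) (hSsq : S * S = Xᵀ * X + Zᵀ * Z)
    (Q : Matrix (Fin n ⊕ Fin n) (Fin n ⊕ Fin n) ℝ)
    (hQ : Q = fromBlocks (X * S⁻¹) (-(Z * S⁻¹)) (Z * S⁻¹) (X * S⁻¹) *
      fromBlocks β₁ β₂ (-β₂) β₁) :
    Qᵀ * Q = 1 ∧ Q * Qᵀ = 1 ∧ Q * Jmat n = Jmat n * Q ∧
    ∀ x : Fin n → ℝ,
      Q *ᵥ Sum.elim (β₁ᵀ *ᵥ x) (β₂ᵀ *ᵥ x) =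
        Sum.elim (X *ᵥ (S⁻¹ *ᵥ x)) (Z *ᵥ (S⁻¹ *ᵥ x)) := by
  set A := X * S⁻¹ with hA
  set B := Z * S⁻¹ with hB
  have hdet : IsUnit S.det := hS.det_pos.ne'.isUnit
  have hSt : Sᵀ = S := by
    have := hS.isHermitian
    exact (show S.IsSymm by simpa [conjTranspose, Matrix.map_id] using this)
  have hSinv : S * S⁻¹ = 1 := mul_nonsing_inv S hdet
  have hSinv' : S⁻¹ * S = 1 := nonsing_inv_mul S hdet
  have hSit : (S⁻¹)ᵀ = S⁻¹ := by rw [transpose_nonsing_inv, hSt]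
  -- A,B orthogonality relations
  have h1 : Aᵀ * A + Bᵀ * B = 1 := by
    have : Aᵀ * A + Bᵀ * B = S⁻¹ * (S * S) * S⁻¹ := by
      rw [hSsq, hA, hB]
      simp only [transpose_mul, hSit]
      noncomm_ring
    rw [this, ← mul_assoc, mul_assoc (S⁻¹ * S), hSinv', hSinv, one_mul]
  have h2 : Aᵀ * B = Bᵀ * A := by
    rw [hA, hB]
    simp only [transpose_mul, hSit]
    rw [mul_assoc, mul_assoc, ← mul_assoc Xᵀ, hfr, ← mul_assoc Zᵀ]
  -- block matrices
  have hXo : (fromBlocks A (-B) B A)ᵀ * fromBlocks A (-B) B A = 1 := by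
    rw [fromBlocks_transpose, fromBlocks_multiply,
      show Aᵀ * A + Bᵀ * B = 1 from h1,
      show Aᵀ * -B + Bᵀ * A = 0 by rw [Matrix.mul_neg, h2, neg_add_cancel],
      show (-B)ᵀ * A + Aᵀ * B = 0 by rw [transpose_neg, Matrix.neg_mul, h2, neg_add_cancel],
      show (-B)ᵀ * -B + Aᵀ * A = 1 by
        rw [transpose_neg, Matrix.neg_mul, Matrix.mul_neg, neg_neg, add_comm]; exact h1,
      fromBlocks_one]
  have hBo : fromBlocks β₁ β₂ (-β₂) β₁ * (fromBlocks β₁ β₂ (-β₂) β₁)ᵀ = 1 := by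
    rw [fromBlocks_transpose, fromBlocks_multiply,
      show β₁ * β₁ᵀ + β₂ * β₂ᵀ = 1 from hβ2,
      show β₁ * (-β₂)ᵀ + β₂ * β₁ᵀ = 0 by
        rw [transpose_neg, Matrix.mul_neg, hβ1, neg_add_cancel],
      show -β₂ * β₁ᵀ + β₁ * β₂ᵀ = 0 by rw [Matrix.neg_mul, hβ1, neg_add_cancel],
      show -β₂ * (-β₂)ᵀ + β₁ * β₁ᵀ = 1 by
        rw [transpose_neg, Matrix.neg_mul, Matrix.mul_neg, neg_neg, add_comm]; exact hβ2,
      fromBlocks_one]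
  have hBo' : (fromBlocks β₁ β₂ (-β₂) β₁)ᵀ * fromBlocks β₁ β₂ (-β₂) β₁ = 1 :=
    mul_eq_one_comm.mp hBo
  have hQtQ : Qᵀ * Q = 1 := by
    rw [hQ, transpose_mul, mul_assoc, ← mul_assoc (fromBlocks A (-B) B A)ᵀ, hXo, one_mul, hBo']
  refine ⟨hQtQ, mul_eq_one_comm.mp hQtQ, ?_, ?_⟩
  · have c1 := commJ A (-B)
    have c2 := commJ β₁ β₂
    rw [neg_neg] at c1
    rw [hQ, mul_assoc, c2, ← mul_assoc, c1, mul_assoc]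
  · intro x
    have hv : Sum.elim (β₁ᵀ *ᵥ x) (β₂ᵀ *ᵥ x) =
        (fromBlocks β₁ β₂ (-β₂) β₁)ᵀ *ᵥ Sum.elim x 0 := by
      rw [fromBlocks_transpose, fromBlocks_mulVec]
      simp
    rw [hv, mulVec_mulVec, hQ, mul_assoc, hBo, mul_one, fromBlocks_mulVec]
    simp [mulVec_mulVec]
    rfl
end

section
/- Let M_D be a real symmetric n×n matrix, set 𝕄 = Iₙ + M_D², and let 𝕄^{−1/2} be the inverse of the positive definite square root of 𝕄. Let β₁, β₂ satisfy the β-conditions. Define 𝓜_D = [[𝕄^{−1/2}, −𝕄^{−1/2}M_D],[𝕄^{−1/2}M_D, 𝕄^{−1/2}]] and 𝓑 = [[β₁, β₂],[−β₂, β₁]], and set U = 𝓜_D𝓑. Then UᵗU = UUᵗ = I_{2n} and UJ = JU. Moreover, if X, Z are real n×n matrices with X invertible, XᵗZ = ZᵗX and M_D = ZX⁻¹, then for every x ∈ ℝⁿ one has U·(β₁ᵗx, β₂ᵗx)ᵀ = (Xy, Zy)ᵀ with y = X⁻¹𝕄^{−1/2}x. -/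
open Matrix

private lemma posDef_transpose_self {n : ℕ} {T : Matrix (Fin n) (Fin n) ℝ}
    (hT : T.PosDef) : Tᵀ = T := by
  ext i j
  have := congrFun (congrFun hT.1 i) j
  simpa [Matrix.conjTranspose_apply] using this

/-- If `T` is positive definite and `T²` commutes with a symmetric `M`, then `T`
commutes with `M`.  (Here `T² = 1 + M²`.) -/
private lemma commute_MT {n : ℕ} (M T : Matrix (Fin n) (Fin n) ℝ)
    (hM : Mᵀ = M) (hT : T.PosDef) (hTsq : T * T = 1 + M * M) :
    M * T = T * M := by
  have hTt : Tᵀ = T := posDef_transpose_self hT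
  set S := M * T - T * M with hS
  have hcen : M * (T * T) = (T * T) * M := by rw [hTsq]; noncomm_ring
  have h0 : T * S + S * T = 0 := by
    have h : T * S + S * T = M * (T * T) - (T * T) * M := by rw [hS]; noncomm_ring
    rw [h, hcen, sub_self]
  have hST : S * T = -(T * S) := eq_neg_of_add_eq_zero_right h0
  have hSt : Sᵀ = -S := by
    rw [hS, transpose_sub, transpose_mul, transpose_mul, hM, hTt]
    noncomm_ring
  have hmat : Sᵀ * (T * S) = T * (S * S) := by
    rw [hSt, neg_mul, ← Matrix.mul_assoc, hST, neg_mul, neg_neg, Matrix.mul_assoc]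
  have htr : Matrix.trace (T * (S * S)) = 0 := by
    have h1 : Matrix.trace (T * (S * S)) = Matrix.trace (S * (T * S)) := by
      rw [← Matrix.mul_assoc, Matrix.trace_mul_comm]
    have h2 : S * (T * S) = -(T * (S * S)) := by
      rw [← Matrix.mul_assoc, hST, neg_mul, Matrix.mul_assoc]
    rw [h2, Matrix.trace_neg] at h1
    linarith
  have htr' : Matrix.trace (Sᵀ * (T * S)) = 0 := by rw [hmat]; exact htr
  have key : Matrix.trace (Sᵀ * (T * S)) =
      ∑ j, (fun i => S i j) ⬝ᵥ T *ᵥ (fun i => S i j) := by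
    simp only [Matrix.trace, Matrix.diag_apply, Matrix.mul_apply, Matrix.transpose_apply,
      dotProduct, Matrix.mulVec, Finset.mul_sum]
  have hsum : ∑ j, (fun i => S i j) ⬝ᵥ T *ᵥ (fun i => S i j) = 0 := by
    rw [← key]; exact htr'
  have hquad : ∀ j ∈ Finset.univ, (0:ℝ) ≤ (fun i => S i j) ⬝ᵥ T *ᵥ (fun i => S i j) := by
    intro j _
    simpa using hT.posSemidef.dotProduct_mulVec_nonneg (fun i => S i j)
  have hzero : ∀ j, (fun i => S i j) ⬝ᵥ T *ᵥ (fun i => S i j) = 0 := fun j =>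
    (Finset.sum_eq_zero_iff_of_nonneg hquad).mp hsum j (Finset.mem_univ j)
  have hScol : S = 0 := by
    ext i j
    by_contra h
    have hne : (fun i => S i j) ≠ 0 := by
      intro h0
      exact h (by simpa using congrFun h0 i)
    have := hT.dotProduct_mulVec_pos hne
    rw [show star (fun i => S i j) = (fun i => S i j) from rfl] at this
    exact absurd (hzero j) (ne_of_gt this)
  have h' := hScol
  rw [hS] at h'
  exact sub_eq_zero.mp h'

/-- Let `M_D` be real symmetric, `𝕄 = I + M_D²`, `T` its positive definite square root
(so `𝕄^{−1/2} = T⁻¹`), and let `β₁, β₂` satisfy the β-conditions.  Then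
`U = 𝓜_D 𝓑` (with `𝓜_D = [[𝕄^{−1/2}, −𝕄^{−1/2}M_D],[𝕄^{−1/2}M_D, 𝕄^{−1/2}]]` and
`𝓑 = [[β₁, β₂],[−β₂, β₁]]`) is orthogonal and commutes with `J`; moreover if `X` is
invertible, `XᵗZ = ZᵗX` and `M_D = ZX⁻¹`, then `U (β₁ᵗx, β₂ᵗx)ᵀ = (Xy, Zy)ᵀ` with
`y = X⁻¹𝕄^{−1/2}x`. -/
theorem MD_times_B_unitary (n : ℕ) (M T β₁ β₂ : Matrix (Fin n) (Fin n) ℝ)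
    (hM : Mᵀ = M)
    (hβ1 : β₁ * β₂ᵀ = β₂ * β₁ᵀ) (hβ2 : β₁ * β₁ᵀ + β₂ * β₂ᵀ = 1)
    (hT : T.PosDef) (hTsq : T * T = 1 + M * M)
    (U : Matrix (Fin n ⊕ Fin n) (Fin n ⊕ Fin n) ℝ)
    (hU : U = fromBlocks T⁻¹ (-(T⁻¹ * M)) (T⁻¹ * M) T⁻¹ * fromBlocks β₁ β₂ (-β₂) β₁) :
    Uᵀ * U = 1 ∧ U * Uᵀ = 1 ∧ U * Jmat n = Jmat n * U ∧
    ∀ X Z : Matrix (Fin n) (Fin n) ℝ, IsUnit X → Xᵀ * Z = Zᵀ * X → M = Z * X⁻¹ →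
      ∀ x : Fin n → ℝ,
        U *ᵥ Sum.elim (β₁ᵀ *ᵥ x) (β₂ᵀ *ᵥ x) =
          Sum.elim (X *ᵥ (X⁻¹ *ᵥ (T⁻¹ *ᵥ x))) (Z *ᵥ (X⁻¹ *ᵥ (T⁻¹ *ᵥ x))) := by
  have hTt : Tᵀ = T := posDef_transpose_self hT
  have hdet : IsUnit T.det := (Matrix.isUnit_iff_isUnit_det T).mp hT.isUnit
  have hTi : T * T⁻¹ = 1 := mul_nonsing_inv T hdet
  have hiT : T⁻¹ * T = 1 := nonsing_inv_mul T hdet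
  have hTit : (T⁻¹)ᵀ = T⁻¹ := by rw [transpose_nonsing_inv, hTt]
  have hcT : M * T = T * M := commute_MT M T hM hT hTsq
  have hc : M * T⁻¹ = T⁻¹ * M := by
    calc M * T⁻¹ = T⁻¹ * T * (M * T⁻¹) := by rw [hiT, one_mul]
      _ = T⁻¹ * (M * T * T⁻¹) := by
          rw [Matrix.mul_assoc T⁻¹ T _, ← Matrix.mul_assoc T M T⁻¹, ← hcT]
      _ = T⁻¹ * M := by rw [Matrix.mul_assoc M T T⁻¹, hTi, Matrix.mul_one]
  -- 𝓑 is orthogonal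
  have hB : fromBlocks β₁ β₂ (-β₂) β₁ * (fromBlocks β₁ β₂ (-β₂) β₁)ᵀ =
      (1 : Matrix (Fin n ⊕ Fin n) (Fin n ⊕ Fin n) ℝ) := by
    rw [fromBlocks_transpose, fromBlocks_multiply, ← fromBlocks_one]
    refine fromBlocks_inj.mpr ⟨?_, ?_, ?_, ?_⟩
    · exact hβ2
    · rw [transpose_neg, mul_neg, hβ1, neg_add_cancel]
    · rw [neg_mul, ← hβ1, neg_add_cancel]
    · rw [transpose_neg, neg_mul_neg, add_comm, hβ2]
  have hBB := mul_eq_one_comm.mp hB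
  -- 𝓜 is orthogonal
  have hkey : T⁻¹ * T⁻¹ + T⁻¹ * M * (M * T⁻¹) = 1 := by
    have h1 : T⁻¹ * T⁻¹ + T⁻¹ * M * (M * T⁻¹) = T⁻¹ * (1 + M * M) * T⁻¹ := by noncomm_ring
    rw [h1, ← hTsq, ← Matrix.mul_assoc, hiT, one_mul, hTi]
  have hMM : fromBlocks T⁻¹ (-(T⁻¹ * M)) (T⁻¹ * M) T⁻¹ *
      (fromBlocks T⁻¹ (-(T⁻¹ * M)) (T⁻¹ * M) T⁻¹)ᵀ =
      (1 : Matrix (Fin n ⊕ Fin n) (Fin n ⊕ Fin n) ℝ) := by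
    have hMAt : (T⁻¹ * M)ᵀ = M * T⁻¹ := by rw [transpose_mul, hM, hTit]
    rw [fromBlocks_transpose, fromBlocks_multiply, ← fromBlocks_one]
    refine fromBlocks_inj.mpr ⟨?_, ?_, ?_, ?_⟩
    · rw [hTit, transpose_neg, hMAt, neg_mul_neg]; exact hkey
    · rw [hMAt, hTit, neg_mul, ← Matrix.mul_assoc, add_neg_cancel]
    · rw [hTit, transpose_neg, hMAt, mul_neg, ← Matrix.mul_assoc, add_neg_cancel]
    · rw [hMAt, hTit, add_comm]; exact hkey
  have hMM' := mul_eq_one_comm.mp hMM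
  -- commutation with J
  have hJM : fromBlocks T⁻¹ (-(T⁻¹ * M)) (T⁻¹ * M) T⁻¹ * Jmat n =
      Jmat n * fromBlocks T⁻¹ (-(T⁻¹ * M)) (T⁻¹ * M) T⁻¹ := by
    simp [Jmat, fromBlocks_multiply]
  have hJB : fromBlocks β₁ β₂ (-β₂) β₁ * Jmat n =
      Jmat n * fromBlocks β₁ β₂ (-β₂) β₁ := by
    simp [Jmat, fromBlocks_multiply]
  refine ⟨?_, ?_, ?_, ?_⟩
  · rw [hU, transpose_mul, Matrix.mul_assoc, ← Matrix.mul_assoc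
      ((fromBlocks T⁻¹ (-(T⁻¹ * M)) (T⁻¹ * M) T⁻¹)ᵀ) _ _, hMM', one_mul, hBB]
  · rw [hU, transpose_mul, Matrix.mul_assoc, ← Matrix.mul_assoc
      (fromBlocks β₁ β₂ (-β₂) β₁) _ _, hB, one_mul, hMM]
  · rw [hU, Matrix.mul_assoc, hJB, ← Matrix.mul_assoc, hJM, Matrix.mul_assoc]
  · intro X Z hX hXZ hMZ x
    have hXd : IsUnit X.det := (Matrix.isUnit_iff_isUnit_det X).mp hX
    have e1 : β₁ *ᵥ (β₁ᵀ *ᵥ x) + β₂ *ᵥ (β₂ᵀ *ᵥ x) = x := by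
      rw [mulVec_mulVec, mulVec_mulVec, ← add_mulVec, hβ2, one_mulVec]
    have e2 : (-β₂) *ᵥ (β₁ᵀ *ᵥ x) + β₁ *ᵥ (β₂ᵀ *ᵥ x) = 0 := by
      rw [mulVec_mulVec, mulVec_mulVec, ← add_mulVec, neg_mul, ← hβ1, neg_add_cancel,
        zero_mulVec]
    have h1 : fromBlocks β₁ β₂ (-β₂) β₁ *ᵥ Sum.elim (β₁ᵀ *ᵥ x) (β₂ᵀ *ᵥ x) =
        Sum.elim x 0 := by
      rw [fromBlocks_mulVec]
      simp only [Sum.elim_comp_inl, Sum.elim_comp_inr]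
      rw [e1, e2]
    have h2 : fromBlocks T⁻¹ (-(T⁻¹ * M)) (T⁻¹ * M) T⁻¹ *ᵥ Sum.elim x 0 =
        Sum.elim (T⁻¹ *ᵥ x) ((T⁻¹ * M) *ᵥ x) := by
      rw [fromBlocks_mulVec]
      simp only [Sum.elim_comp_inl, Sum.elim_comp_inr, mulVec_zero, add_zero]
    have r1 : X *ᵥ (X⁻¹ *ᵥ (T⁻¹ *ᵥ x)) = T⁻¹ *ᵥ x := by
      rw [mulVec_mulVec, mul_nonsing_inv X hXd, one_mulVec]
    have r2 : Z *ᵥ (X⁻¹ *ᵥ (T⁻¹ *ᵥ x)) = (T⁻¹ * M) *ᵥ x := by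
      simp only [mulVec_mulVec]
      rw [← Matrix.mul_assoc, ← hMZ, hc]
    rw [hU, ← mulVec_mulVec, h1, h2, r1, r2]
end

section
/- Let β₁, β₂ satisfy the β-conditions, let M_D be a real symmetric n×n matrix, 𝕄 = Iₙ + M_D², and 𝕄^{−1/2} the inverse of the positive definite square root of 𝕄. Define 𝓜_D = [[𝕄^{−1/2}, −𝕄^{−1/2}M_D],[𝕄^{−1/2}M_D, 𝕄^{−1/2}]], 𝓑 = [[β₁, β₂],[−β₂, β₁]], Π₁ = [[β₂ᵗβ₂, −β₂ᵗβ₁],[−β₁ᵗβ₂, β₁ᵗβ₁]], τ₁ = 2Π₁ − I_{2n}, and 𝔅 = [[β₁ᵗβ₁ − β₂ᵗβ₂, 2β₂ᵗβ₁],[−2β₂ᵗβ₁, β₁ᵗβ₁ − β₂ᵗβ₂]]. Then 𝓑τ₁𝓑ᵗ = [[−Iₙ, 0],[0, Iₙ]], and the matrix W := (𝓜_D𝓑)τ₁(𝓜_D𝓑)ᵗτ₁ satisfies W = 𝓜_D²𝔅. -/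
open Matrix


lemma eq_zero_of_trace_transpose_mul_self' {m : Type*} [Fintype m] (X : Matrix m m ℝ)
    (h : (Xᵀ * X).trace = 0) : X = 0 := by
  simp only [Matrix.trace, Matrix.diag, Matrix.mul_apply, Matrix.transpose_apply] at h
  ext i j
  have h1 := (Finset.sum_eq_zero_iff_of_nonneg
    (fun j _ => Finset.sum_nonneg fun i _ => mul_self_nonneg (X i j))).mp h j (Finset.mem_univ j)
  have h2 := (Finset.sum_eq_zero_iff_of_nonneg
    (fun i _ => mul_self_nonneg (X i j))).mp h1 i (Finset.mem_univ i)
  simpa using mul_self_eq_zero.mp h2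

lemma trace_transpose_mul_self_nonneg' {m : Type*} [Fintype m] (X : Matrix m m ℝ) :
    0 ≤ (Xᵀ * X).trace := by
  simp only [Matrix.trace, Matrix.diag, Matrix.mul_apply, Matrix.transpose_apply]
  exact Finset.sum_nonneg fun j _ => Finset.sum_nonneg fun i _ => mul_self_nonneg _

lemma commute_of_posDef_sq' {n : ℕ} (M T : Matrix (Fin n) (Fin n) ℝ)
    (hT : T.PosDef) (hTsq : T * T = 1 + M * M) : M * T = T * M := by
  set C := M * T - T * M with hC
  have hcomm : M * (T * T) = (T * T) * M := by rw [hTsq]; noncomm_ring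
  have h0 : T * C + C * T = 0 := by
    have h' : T * C + C * T = M * (T * T) - (T * T) * M := by rw [hC]; noncomm_ring
    rw [h', hcomm, sub_self]
  obtain ⟨R, hRH, hR2⟩ : ∃ R : Matrix (Fin n) (Fin n) ℝ, Rᵀ = R ∧ R * R = T := by
    open scoped MatrixOrder in
    refine ⟨CFC.sqrt T, ?_, CFC.sqrt_mul_sqrt_self T hT.posSemidef.nonneg⟩
    open scoped MatrixOrder in
    have h := (CFC.sqrt_nonneg T).posSemidef.1
    rwa [Matrix.IsHermitian, conjTranspose_eq_transpose_of_trivial] at h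
  have e1 : (R*C)ᵀ * (R*C) = Cᵀ * (T * C) := by
    rw [transpose_mul, hRH, ← hR2]; noncomm_ring
  have e2 : ((C*R)ᵀ * (C*R)).trace = (Cᵀ * (C * T)).trace := by
    have h' : (C*R)ᵀ * (C*R) = R * (Cᵀ * C * R) := by
      rw [transpose_mul, hRH]; noncomm_ring
    rw [h', Matrix.trace_mul_comm]
    congr 1
    rw [← hR2]; noncomm_ring
  have key : ((R*C)ᵀ*(R*C)).trace + ((C*R)ᵀ*(C*R)).trace = 0 := by
    rw [e1, e2, ← Matrix.trace_add,
      show Cᵀ*(T*C) + Cᵀ*(C*T) = Cᵀ*(T*C + C*T) from (mul_add _ _ _).symm, h0, mul_zero,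
      trace_zero]
  have hz : ((R*C)ᵀ*(R*C)).trace = 0 := le_antisymm
    (by linarith [trace_transpose_mul_self_nonneg' (C*R)])
    (trace_transpose_mul_self_nonneg' (R*C))
  have hRC : R * C = 0 := eq_zero_of_trace_transpose_mul_self' _ hz
  have hTdet : IsUnit T.det := isUnit_iff_ne_zero.mpr hT.det_pos.ne'
  have hC0 : C = 0 := by
    have h1 : T⁻¹ * (R * (R * C)) = C := by
      rw [← Matrix.mul_assoc R R C, hR2, ← Matrix.mul_assoc, Matrix.nonsing_inv_mul T hTdet,
        one_mul]
    rw [← h1, hRC, Matrix.mul_zero, Matrix.mul_zero]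
  rw [hC] at hC0
  exact sub_eq_zero.mp hC0


lemma fromBlocks_sub' {n : ℕ} (A B C D A' B' C' D' : Matrix (Fin n) (Fin n) ℝ) :
    fromBlocks A B C D - fromBlocks A' B' C' D' = fromBlocks (A-A') (B-B') (C-C') (D-D') := by
  rw [sub_eq_add_neg, fromBlocks_neg, fromBlocks_add]
  simp [sub_eq_add_neg]


/-- With `β₁, β₂` satisfying the β-conditions, `M_D` real symmetric, `T` the positive
definite square root of `𝕄 = I + M_D²` (so `𝕄^{−1/2} = T⁻¹`), and with
`𝓜_D = [[T⁻¹, −T⁻¹M_D],[T⁻¹M_D, T⁻¹]]`, `𝓑 = [[β₁, β₂],[−β₂, β₁]]`,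
`Π₁ = [[β₂ᵗβ₂, −β₂ᵗβ₁],[−β₁ᵗβ₂, β₁ᵗβ₁]]`, `τ₁ = 2Π₁ − I`, and
`𝔅 = [[β₁ᵗβ₁ − β₂ᵗβ₂, 2β₂ᵗβ₁],[−2β₂ᵗβ₁, β₁ᵗβ₁ − β₂ᵗβ₂]]`, one has
`𝓑 τ₁ 𝓑ᵗ = [[−I, 0],[0, I]]` and `W = (𝓜_D𝓑) τ₁ (𝓜_D𝓑)ᵗ τ₁ = 𝓜_D² 𝔅`. -/
theorem W_equals_MD_squared_times_frakB (n : ℕ) (M T β₁ β₂ : Matrix (Fin n) (Fin n) ℝ)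
    (hM : Mᵀ = M)
    (hβ1 : β₁ * β₂ᵀ = β₂ * β₁ᵀ) (hβ2 : β₁ * β₁ᵀ + β₂ * β₂ᵀ = 1)
    (hT : T.PosDef) (hTsq : T * T = 1 + M * M)
    (MD B Pi1 tau1 frakB : Matrix (Fin n ⊕ Fin n) (Fin n ⊕ Fin n) ℝ)
    (hMD : MD = fromBlocks T⁻¹ (-(T⁻¹ * M)) (T⁻¹ * M) T⁻¹)
    (hB : B = fromBlocks β₁ β₂ (-β₂) β₁)
    (hPi1 : Pi1 = fromBlocks (β₂ᵀ * β₂) (-(β₂ᵀ * β₁)) (-(β₁ᵀ * β₂)) (β₁ᵀ * β₁))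
    (htau1 : tau1 = (2 : ℝ) • Pi1 - 1)
    (hfrakB : frakB = fromBlocks (β₁ᵀ * β₁ - β₂ᵀ * β₂) ((2 : ℝ) • (β₂ᵀ * β₁))
      (-((2 : ℝ) • (β₂ᵀ * β₁))) (β₁ᵀ * β₁ - β₂ᵀ * β₂)) :
    B * tau1 * Bᵀ = fromBlocks (-1) 0 0 1 ∧
    (MD * B) * tau1 * (MD * B)ᵀ * tau1 = MD * MD * frakB := by
  have hMT : M * T = T * M := commute_of_posDef_sq' M T hT hTsq
  have hTdet : IsUnit T.det := isUnit_iff_ne_zero.mpr hT.det_pos.ne'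
  have hMTi : M * T⁻¹ = T⁻¹ * M := by
    calc M * T⁻¹ = T⁻¹ * T * (M * T⁻¹) := by rw [Matrix.nonsing_inv_mul T hTdet, one_mul]
      _ = T⁻¹ * (M * T) * T⁻¹ := by rw [hMT]; simp only [Matrix.mul_assoc]
      _ = T⁻¹ * M * (T * T⁻¹) := by simp only [Matrix.mul_assoc]
      _ = T⁻¹ * M := by rw [Matrix.mul_nonsing_inv T hTdet, mul_one]
  have hTt : Tᵀ = T := by
    have h := hT.1
    rwa [Matrix.IsHermitian, conjTranspose_eq_transpose_of_trivial] at h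
  have hTit : (T⁻¹)ᵀ = T⁻¹ := by rw [Matrix.transpose_nonsing_inv, hTt]
  have hBBt : B * Bᵀ = 1 := by
    rw [hB, fromBlocks_transpose, fromBlocks_multiply, ← fromBlocks_one, fromBlocks_inj]
    refine ⟨hβ2, ?_, ?_, ?_⟩
    · simp only [transpose_neg, mul_neg, neg_mul]
      rw [hβ1, neg_add_cancel]
    · simp only [transpose_neg, mul_neg, neg_mul]
      rw [hβ1, neg_add_cancel]
    · simp only [transpose_neg, mul_neg, neg_mul, neg_neg]
      rw [add_comm]; exact hβ2
  have hBtB : Bᵀ * B = 1 := mul_eq_one_comm.mp hBBt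
  have h12 : fromBlocks (β₁ᵀ*β₁ + β₂ᵀ*β₂) (β₁ᵀ*β₂ - β₂ᵀ*β₁) (β₂ᵀ*β₁ - β₁ᵀ*β₂) (β₂ᵀ*β₂ + β₁ᵀ*β₁)
      = fromBlocks 1 0 0 1 := by
    rw [fromBlocks_one, ← hBtB, hB, fromBlocks_transpose, fromBlocks_multiply, fromBlocks_inj]
    refine ⟨?_, ?_, ?_, ?_⟩ <;>
      (simp only [transpose_neg, neg_mul, mul_neg, neg_neg, sub_eq_add_neg]; try abel)
  obtain ⟨h1, h2', -, -⟩ := fromBlocks_inj.mp h12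
  have h2 : β₁ᵀ*β₂ = β₂ᵀ*β₁ := sub_eq_zero.mp h2'
  set D : Matrix (Fin n ⊕ Fin n) (Fin n ⊕ Fin n) ℝ := fromBlocks (-1) 0 0 1 with hD
  have htauB : tau1 = fromBlocks (β₂ᵀ*β₂ - β₁ᵀ*β₁) (-(β₂ᵀ*β₁) - β₁ᵀ*β₂)
      (-(β₁ᵀ*β₂) - β₂ᵀ*β₁) (β₁ᵀ*β₁ - β₂ᵀ*β₂) := by
    rw [htau1, hPi1, fromBlocks_smul, ← fromBlocks_one, fromBlocks_sub', fromBlocks_inj]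
    refine ⟨?_, ?_, ?_, ?_⟩
    · rw [two_smul, ← h1]; abel
    · rw [smul_neg, two_smul, h2]; abel
    · rw [smul_neg, two_smul, ← h2]; abel
    · rw [two_smul, ← h1]; abel
  have htau1' : tau1 = Bᵀ * D * B := by
    rw [htauB, hB, hD, fromBlocks_transpose, fromBlocks_multiply, fromBlocks_multiply,
      fromBlocks_inj]
    refine ⟨?_, ?_, ?_, ?_⟩ <;>
      ((try simp only [transpose_neg]); noncomm_ring)
  have goal1 : B * tau1 * Bᵀ = D := by
    rw [htau1']
    calc B * (Bᵀ * D * B) * Bᵀ = (B * Bᵀ) * D * (B * Bᵀ) := by noncomm_ring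
      _ = D := by rw [hBBt, one_mul, mul_one]
  have hfrakB' : frakB = D * tau1 := by
    rw [hfrakB, htauB, hD, fromBlocks_multiply, fromBlocks_inj]
    refine ⟨?_, ?_, ?_, ?_⟩
    · simp only [neg_one_mul, zero_mul, mul_zero, add_zero, zero_add, neg_sub]
    · simp only [neg_one_mul, zero_mul, mul_zero, add_zero, zero_add, neg_sub, neg_neg,
        one_mul]
      rw [two_smul, h2]
      abel
    · simp only [neg_one_mul, zero_mul, mul_zero, add_zero, zero_add, one_mul]
      rw [two_smul, h2]
      abel
    · simp only [neg_one_mul, zero_mul, mul_zero, add_zero, zero_add, one_mul]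
  have hMDt : MDᵀ = fromBlocks T⁻¹ (T⁻¹*M) (-(T⁻¹*M)) T⁻¹ := by
    rw [hMD, fromBlocks_transpose]
    simp only [transpose_neg, transpose_mul, hM, hTit, hMTi]
  have hDMDt : D * MDᵀ = MD * D := by
    rw [hMDt, hMD, hD, fromBlocks_multiply, fromBlocks_multiply, fromBlocks_inj]
    exact ⟨by noncomm_ring, by noncomm_ring, by noncomm_ring, by noncomm_ring⟩
  refine ⟨goal1, ?_⟩
  calc (MD * B) * tau1 * (MD * B)ᵀ * tau1 = MD * (B * tau1 * Bᵀ) * MDᵀ * tau1 := by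
        rw [transpose_mul]; noncomm_ring
    _ = MD * (D * MDᵀ) * tau1 := by rw [goal1]; noncomm_ring
    _ = MD * (MD * D) * tau1 := by rw [hDMDt]
    _ = MD * MD * (D * tau1) := by noncomm_ring
    _ = MD * MD * frakB := by rw [← hfrakB']
end

section
/- Let V : ℝ → Mat_{n×n}(ℝ) be continuous with V(x) symmetric for every x, and let λ ∈ ℝ. Suppose X, Z, Ẋ, Ż : [0,s] → Mat_{n×n}(ℝ) are differentiable and satisfy X′ = Z, Z′ = (V − λIₙ)X, Ẋ′ = Ż, Ż′ = (V − λIₙ)Ẋ − X on [0,s], with Ẋ(0) = 0 and Ż(0) = 0. Then d/dx (XᵗŻ − ZᵗẊ) = −XᵗX on [0,s], and consequently X(s)ᵗŻ(s) − Z(s)ᵗẊ(s) = −∫₀ˢ X(t)ᵗX(t) dt; in particular X(s)ᵗŻ(s) − Z(s)ᵗẊ(s) is symmetric negative semidefinite. -/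
open Matrix

/-- Let `X, Z` solve the shooting system `X′ = Z`, `Z′ = (V − λI)X` on `[0, s]` and let
`Ẋ, Ż` solve the variational system `Ẋ′ = Ż`, `Ż′ = (V − λI)Ẋ − X` with
`Ẋ(0) = Ż(0) = 0`.  Then `(XᵗŻ − ZᵗẊ)′ = −XᵗX` on `[0, s]`, hence
`X(s)ᵗŻ(s) − Z(s)ᵗẊ(s) = −∫₀ˢ X(t)ᵗX(t) dt` is symmetric negative semidefinite. -/
theorem lambda_derivative_identity (n : ℕ) (V : ℝ → Matrix (Fin n) (Fin n) ℝ)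
    (lam s : ℝ) (hs : 0 ≤ s)
    (hVcont : ∀ i j, Continuous fun x => V x i j)
    (hVsym : ∀ x, (V x)ᵀ = V x)
    (X Z Xd Zd : ℝ → Matrix (Fin n) (Fin n) ℝ)
    (hX : ∀ x ∈ Set.Icc (0:ℝ) s, ∀ i j,
      HasDerivWithinAt (fun t => X t i j) (Z x i j) (Set.Icc (0:ℝ) s) x)
    (hZ : ∀ x ∈ Set.Icc (0:ℝ) s, ∀ i j,
      HasDerivWithinAt (fun t => Z t i j)
        (((V x - lam • (1 : Matrix (Fin n) (Fin n) ℝ)) * X x) i j) (Set.Icc (0:ℝ) s) x)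
    (hXd : ∀ x ∈ Set.Icc (0:ℝ) s, ∀ i j,
      HasDerivWithinAt (fun t => Xd t i j) (Zd x i j) (Set.Icc (0:ℝ) s) x)
    (hZd : ∀ x ∈ Set.Icc (0:ℝ) s, ∀ i j,
      HasDerivWithinAt (fun t => Zd t i j)
        (((V x - lam • (1 : Matrix (Fin n) (Fin n) ℝ)) * Xd x - X x) i j)
        (Set.Icc (0:ℝ) s) x)
    (hXd0 : Xd 0 = 0) (hZd0 : Zd 0 = 0) :
    (∀ x ∈ Set.Icc (0:ℝ) s, ∀ i j,
      HasDerivWithinAt (fun t => ((X t)ᵀ * Zd t - (Z t)ᵀ * Xd t) i j)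
        ((-((X x)ᵀ * X x)) i j) (Set.Icc (0:ℝ) s) x) ∧
    (∀ i j, ((X s)ᵀ * Zd s - (Z s)ᵀ * Xd s) i j = -∫ t in (0:ℝ)..s, ((X t)ᵀ * X t) i j) ∧
    ((X s)ᵀ * Zd s - (Z s)ᵀ * Xd s)ᵀ = (X s)ᵀ * Zd s - (Z s)ᵀ * Xd s ∧
    (-((X s)ᵀ * Zd s - (Z s)ᵀ * Xd s)).PosSemidef := by
  set I := Set.Icc (0:ℝ) s with hI
  set A : ℝ → Matrix (Fin n) (Fin n) ℝ := fun x => V x - lam • 1 with hA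
  have hAsym : ∀ x, (A x)ᵀ = A x := by
    intro x
    simp [hA, transpose_sub, hVsym, transpose_smul]
  -- Part 1 : the derivative identity
  have key : ∀ x ∈ I, ∀ i j,
      HasDerivWithinAt (fun t => ((X t)ᵀ * Zd t - (Z t)ᵀ * Xd t) i j)
        ((-((X x)ᵀ * X x)) i j) I x := by
    intro x hx i j
    have h1 : HasDerivWithinAt (fun t => ∑ k, X t k i * Zd t k j)
        (∑ k, (Z x k i * Zd x k j + X x k i * (A x * Xd x - X x) k j)) I x :=
      HasDerivWithinAt.fun_sum fun k _ => (hX x hx k i).mul (hZd x hx k j)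
    have h2 : HasDerivWithinAt (fun t => ∑ k, Z t k i * Xd t k j)
        (∑ k, ((A x * X x) k i * Xd x k j + Z x k i * Zd x k j)) I x :=
      HasDerivWithinAt.fun_sum fun k _ => (hZ x hx k i).mul (hXd x hx k j)
    have heq : (fun t => ((X t)ᵀ * Zd t - (Z t)ᵀ * Xd t) i j)
        = fun t => (∑ k, X t k i * Zd t k j) - ∑ k, Z t k i * Xd t k j := by
      funext t
      simp [Matrix.mul_apply, Matrix.sub_apply, Matrix.transpose_apply]
    have hAs : ∀ k m, A x k m = A x m k := fun k m =>
      congrFun (congrFun (hAsym x) m) k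
    have hcancel : ∑ k, X x k i * ∑ m, A x k m * Xd x m j
        = ∑ k, (∑ m, A x k m * X x m i) * Xd x k j := by
      simp_rw [Finset.mul_sum, Finset.sum_mul]
      rw [Finset.sum_comm]
      refine Finset.sum_congr rfl fun m _ => Finset.sum_congr rfl fun k _ => ?_
      rw [hAs m k]; ring
    have hval : (∑ k, (Z x k i * Zd x k j + X x k i * (A x * Xd x - X x) k j))
          - ∑ k, ((A x * X x) k i * Xd x k j + Z x k i * Zd x k j)
        = (-((X x)ᵀ * X x)) i j := by
      simp only [Matrix.sub_apply, mul_sub, Finset.sum_add_distrib, Finset.sum_sub_distrib,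
        Matrix.neg_apply, Matrix.mul_apply, Matrix.transpose_apply]
      rw [hcancel]; ring
    rw [heq]
    exact hval ▸ (h1.sub h2)
  refine ⟨key, ?_⟩
  have hXcont : ∀ i j, ContinuousOn (fun t => X t i j) I :=
    fun i j x hx => (hX x hx i j).continuousWithinAt
  have hXXcont : ∀ i j, ContinuousOn (fun t => ((X t)ᵀ * X t) i j) I := by
    intro i j
    simp only [Matrix.mul_apply, Matrix.transpose_apply]
    exact continuousOn_finset_sum _ fun k _ => (hXcont k i).mul (hXcont k j)
  have hint : ∀ i j, IntervalIntegrable (fun t => ((X t)ᵀ * X t) i j)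
      MeasureTheory.volume 0 s := by
    intro i j
    exact ((hXXcont i j).mono (by rw [Set.uIcc_of_le hs])).intervalIntegrable
  have hW0 : (X 0)ᵀ * Zd 0 - (Z 0)ᵀ * Xd 0 = 0 := by
    simp [hXd0, hZd0]
  -- Part 2
  have part2 : ∀ i j, ((X s)ᵀ * Zd s - (Z s)ᵀ * Xd s) i j
      = -∫ t in (0:ℝ)..s, ((X t)ᵀ * X t) i j := by
    intro i j
    have hcontW : ContinuousOn (fun t => ((X t)ᵀ * Zd t - (Z t)ᵀ * Xd t) i j) I :=
      fun x hx => (key x hx i j).continuousWithinAt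
    have hftc : (∫ t in (0:ℝ)..s, (-((X t)ᵀ * X t)) i j)
        = ((X s)ᵀ * Zd s - (Z s)ᵀ * Xd s) i j
          - ((X 0)ᵀ * Zd 0 - (Z 0)ᵀ * Xd 0) i j := by
      refine intervalIntegral.integral_eq_sub_of_hasDeriv_right_of_le hs hcontW ?_ ?_
      · intro x hx
        have h := (key x (Set.Ioo_subset_Icc_self hx) i j).hasDerivAt
          (Icc_mem_nhds hx.1 hx.2)
        exact h.hasDerivWithinAt
      · have := (hint i j).neg
        exact this
    rw [hW0] at hftc
    simp only [Matrix.zero_apply, sub_zero] at hftc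
    rw [← hftc]
    simp [Matrix.neg_apply, intervalIntegral.integral_neg]
  refine ⟨part2, ?_, ?_⟩
  -- Part 3: symmetry
  · ext i j
    rw [Matrix.transpose_apply, part2 j i, part2 i j]
    congr 1
    apply intervalIntegral.integral_congr
    intro t _
    simp only [Matrix.mul_apply, Matrix.transpose_apply]
    exact Finset.sum_congr rfl fun k _ => mul_comm _ _
  -- Part 4: PosSemidef
  · rw [Matrix.posSemidef_iff_dotProduct_mulVec]
    constructor
    · -- Hermitian
      rw [Matrix.IsHermitian, conjTranspose_eq_transpose_of_trivial, transpose_neg]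
      congr 1
      ext i j
      rw [Matrix.transpose_apply, part2 j i, part2 i j]
      congr 1
      apply intervalIntegral.integral_congr
      intro t _
      simp only [Matrix.mul_apply, Matrix.transpose_apply]
      exact Finset.sum_congr rfl fun k _ => mul_comm _ _
    · intro v
      have hterm : ∀ i j, IntervalIntegrable
          (fun t => v i * (((X t)ᵀ * X t) i j * v j)) MeasureTheory.volume 0 s :=
        fun i j => ((hint i j).mul_const (v j)).const_mul (v i)
      have e1 : ∀ i j, v i * ((-((X s)ᵀ * Zd s - (Z s)ᵀ * Xd s)) i j * v j)
          = ∫ t in (0:ℝ)..s, v i * (((X t)ᵀ * X t) i j * v j) := by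
        intro i j
        rw [Matrix.neg_apply, part2 i j, neg_neg, ← intervalIntegral.integral_mul_const,
          ← intervalIntegral.integral_const_mul]
      have e2 : dotProduct (star v) ((-((X s)ᵀ * Zd s - (Z s)ᵀ * Xd s)) *ᵥ v)
          = ∑ i, ∑ j, v i * ((-((X s)ᵀ * Zd s - (Z s)ᵀ * Xd s)) i j * v j) := by
        simp [dotProduct, Matrix.mulVec, Finset.mul_sum]
      rw [e2]
      simp_rw [e1]
      have e4 : ∀ i : Fin n, (∫ t in (0:ℝ)..s, ∑ j, v i * (((X t)ᵀ * X t) i j * v j))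
          = ∑ j, ∫ t in (0:ℝ)..s, v i * (((X t)ᵀ * X t) i j * v j) := fun i =>
        intervalIntegral.integral_finset_sum
          (f := fun j t => v i * (((X t)ᵀ * X t) i j * v j)) (fun j _ => hterm i j)
      have hsumint : ∀ i : Fin n, IntervalIntegrable
          (fun t => ∑ j, v i * (((X t)ᵀ * X t) i j * v j)) MeasureTheory.volume 0 s := by
        intro i
        apply ContinuousOn.intervalIntegrable
        apply continuousOn_finset_sum
        intro j _
        exact continuousOn_const.mul
          (((hXXcont i j).mono (by rw [Set.uIcc_of_le hs])).mul continuousOn_const)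
      have e3 : (∫ t in (0:ℝ)..s, ∑ i, ∑ j, v i * (((X t)ᵀ * X t) i j * v j))
          = ∑ i, ∫ t in (0:ℝ)..s, ∑ j, v i * (((X t)ᵀ * X t) i j * v j) :=
        intervalIntegral.integral_finset_sum
          (f := fun i t => ∑ j, v i * (((X t)ᵀ * X t) i j * v j))
          (fun i _ => hsumint i)
      have e5 : ∑ i, ∑ j, (∫ t in (0:ℝ)..s, v i * (((X t)ᵀ * X t) i j * v j))
          = ∫ t in (0:ℝ)..s, ∑ i, ∑ j, v i * (((X t)ᵀ * X t) i j * v j) :=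
        (Finset.sum_congr rfl fun i _ => (e4 i).symm).trans e3.symm
      rw [e5]
      apply intervalIntegral.integral_nonneg hs
      intro t _
      have hpsd := (Matrix.posSemidef_conjTranspose_mul_self (X t)).dotProduct_mulVec_nonneg v
      rw [Matrix.conjTranspose_eq_transpose_of_trivial] at hpsd
      simpa [dotProduct, Matrix.mulVec, Finset.mul_sum] using hpsd
end

section
/- Let V : ℝ → Mat_{n×n}(ℝ) be continuous with V(s) symmetric for all s, let λ ∈ ℝ, and let X, Z : [0,1] → Mat_{n×n}(ℝ) be differentiable with X′(s) = Z(s) and Z′(s) = (V(s) − λIₙ)X(s), and suppose that for every s the Lagrangian frame conditions hold: X(s)ᵗZ(s) = Z(s)ᵗX(s) and X(s)ᵗX(s) + Z(s)ᵗZ(s) is invertible. Let 𝔅̃ be a constant complex unitary n×n matrix and define W̃(s) = (X(s) + iZ(s))(X(s) − iZ(s))^{−1}𝔅̃. Then W̃ is differentiable and satisfies dW̃/ds = iW̃(s)Ω̃(s), where Ω̃(s) = 2((X(s) − iZ(s))^{−1}𝔅̃)* [X(s)ᵗ(V(s) − λIₙ)X(s) − Z(s)ᵗZ(s)] ((X(s)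 − iZ(s))^{−1}𝔅̃) is Hermitian. -/
open Matrix

attribute [local instance] Matrix.linftyOpNormedAddCommGroup Matrix.linftyOpNormedRing
  Matrix.linftyOpNormedAlgebra

variable {n : ℕ}

/-- entrywise derivatives give matrix-level derivative -/
lemma hasDerivWithinAt_of_entries {f : ℝ → Matrix (Fin n) (Fin n) ℂ}
    {f' : Matrix (Fin n) (Fin n) ℂ} {S : Set ℝ} {x : ℝ}
    (h : ∀ i j, HasDerivWithinAt (fun t => f t i j) (f' i j) S x) :
    HasDerivWithinAt f f' S x := by
  have key : HasDerivWithinAt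
      (fun t => ∑ i : Fin n, ∑ j : Fin n, f t i j • Matrix.single i j (1 : ℂ))
      (∑ i : Fin n, ∑ j : Fin n, f' i j • Matrix.single i j (1 : ℂ)) S x := by
    refine HasDerivWithinAt.fun_sum fun i _ => HasDerivWithinAt.fun_sum fun j _ => ?_
    exact (h i j).smul_const _
  have e : ∀ (g : Matrix (Fin n) (Fin n) ℂ),
      (∑ i : Fin n, ∑ j : Fin n, g i j • Matrix.single i j (1 : ℂ)) = g := by
    intro g
    conv_rhs => rw [matrix_eq_sum_single g]
    simp [smul_single]
  simpa only [e] using key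

/-- matrix-level derivative gives entrywise derivatives -/
lemma entry_hasDerivWithinAt {f : ℝ → Matrix (Fin n) (Fin n) ℂ}
    {f' : Matrix (Fin n) (Fin n) ℂ} {S : Set ℝ} {x : ℝ}
    (h : HasDerivWithinAt f f' S x) (i j : Fin n) :
    HasDerivWithinAt (fun t => f t i j) (f' i j) S x := by
  let l : Matrix (Fin n) (Fin n) ℂ →ₗ[ℝ] ℂ :=
    { toFun := fun A => A i j, map_add' := fun _ _ => rfl, map_smul' := fun _ _ => rfl }
  have hl : Continuous l := l.continuous_of_finiteDimensional
  have := (ContinuousLinearMap.hasFDerivAt (f := ⟨l, hl⟩)).comp_hasDerivWithinAt x h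
  exact this

lemma hasDerivWithinAt_matrix_inv {f : ℝ → Matrix (Fin n) (Fin n) ℂ}
    {f' : Matrix (Fin n) (Fin n) ℂ} {S : Set ℝ} {x : ℝ}
    (h : HasDerivWithinAt f f' S x) (hu : IsUnit (f x)) :
    HasDerivWithinAt (fun t => (f t)⁻¹) (-((f x)⁻¹ * f' * (f x)⁻¹)) S x := by
  obtain ⟨u, hu'⟩ := hu
  have hinv := (hasFDerivAt_ringInverse (𝕜 := ℝ) u)
  rw [hu'] at hinv
  have := hinv.comp_hasDerivWithinAt x h
  simp only [Function.comp_def, Matrix.nonsing_inv_eq_ringInverse] at this ⊢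
  refine this.congr_deriv ?_
  simp [← Matrix.nonsing_inv_eq_ringInverse, hu']

lemma key_algebra (x z a k B : Matrix (Fin n) (Fin n) ℂ)
    (hxH : xᴴ = xᵀ) (hzH : zᴴ = zᵀ)
    (h1 : xᵀ * z = zᵀ * x) (hGu : IsUnit (xᵀ * x + zᵀ * z))
    (hk : k = xᵀ * (a * x) - zᵀ * z) (hkH : kᴴ = k)
    (hB2 : B * Bᴴ = 1) :
    IsUnit (x - Complex.I • z).det ∧
    (z + Complex.I • (a * x)) * (x - Complex.I • z)⁻¹ * B
      + (x + Complex.I • z) * (-((x - Complex.I • z)⁻¹ * (z - Complex.I • (a * x))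
          * (x - Complex.I • z)⁻¹)) * B
      = Complex.I • (((x + Complex.I • z) * (x - Complex.I • z)⁻¹ * B)
          * ((2:ℂ) • (((x - Complex.I • z)⁻¹ * B)ᴴ * k * ((x - Complex.I • z)⁻¹ * B)))) ∧
    ((2:ℂ) • (((x - Complex.I • z)⁻¹ * B)ᴴ * k * ((x - Complex.I • z)⁻¹ * B)))ᴴ
      = (2:ℂ) • (((x - Complex.I • z)⁻¹ * B)ᴴ * k * ((x - Complex.I • z)⁻¹ * B)) := by
  set M : Matrix (Fin n) (Fin n) ℂ := x - Complex.I • z with hM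
  set N : Matrix (Fin n) (Fin n) ℂ := x + Complex.I • z with hN
  set n' : Matrix (Fin n) (Fin n) ℂ := z + Complex.I • (a * x) with hn'
  set m' : Matrix (Fin n) (Fin n) ℂ := z - Complex.I • (a * x) with hm'
  have hMH : Mᴴ = xᵀ + Complex.I • zᵀ := by
    simp [hM, conjTranspose_sub, conjTranspose_smul, hxH, hzH, Complex.star_def,
      Complex.conj_I, neg_smul, sub_neg_eq_add]
  have hNH : Nᴴ = xᵀ - Complex.I • zᵀ := by
    simp [hN, conjTranspose_add, conjTranspose_smul, hxH, hzH, Complex.star_def,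
      Complex.conj_I, neg_smul, sub_eq_add_neg]
  have hG : Mᴴ * M = xᵀ * x + zᵀ * z := by
    rw [hMH, hM]
    simp only [mul_sub, add_mul, smul_mul_assoc, mul_smul_comm, smul_smul,
      Complex.I_mul_I, neg_one_smul, smul_sub, smul_add, h1]
    abel
  have hNG : Nᴴ * N = xᵀ * x + zᵀ * z := by
    rw [hNH, hN]
    simp only [mul_add, sub_mul, smul_mul_assoc, mul_smul_comm, smul_smul,
      Complex.I_mul_I, neg_one_smul, smul_sub, smul_add, h1]
    abel
  have hdetG : IsUnit ((xᵀ * x + zᵀ * z).det) := (Matrix.isUnit_iff_isUnit_det _).mp hGu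
  have hdetM : IsUnit M.det := by
    have : IsUnit (Mᴴ.det * M.det) := by rw [← Matrix.det_mul, hG]; exact hdetG
    exact isUnit_of_mul_isUnit_right this
  have hdetN : IsUnit N.det := by
    have : IsUnit (Nᴴ.det * N.det) := by rw [← Matrix.det_mul, hNG]; exact hdetG
    exact isUnit_of_mul_isUnit_right this
  have hdetNH : IsUnit (Nᴴ.det) := by
    have : IsUnit (Nᴴ.det * N.det) := by rw [← Matrix.det_mul, hNG]; exact hdetG
    exact isUnit_of_mul_isUnit_left this
  have hMi1 : M * M⁻¹ = 1 := Matrix.mul_nonsing_inv M hdetM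
  have hPMH : M⁻¹ᴴ * Mᴴ = 1 := by rw [← conjTranspose_mul, hMi1, conjTranspose_one]
  have hPPH : M⁻¹ * M⁻¹ᴴ = N⁻¹ * Nᴴ⁻¹ := by
    rw [Matrix.conjTranspose_nonsing_inv, ← Matrix.mul_inv_rev, hG, ← hNG,
      Matrix.mul_inv_rev]
  have hU : N * M⁻¹ * M⁻¹ᴴ * Nᴴ = 1 := by
    calc N * M⁻¹ * M⁻¹ᴴ * Nᴴ = N * (M⁻¹ * M⁻¹ᴴ) * Nᴴ := by noncomm_ring
    _ = N * (N⁻¹ * Nᴴ⁻¹) * Nᴴ := by rw [hPPH]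
    _ = (N * N⁻¹) * (Nᴴ⁻¹ * Nᴴ) := by noncomm_ring
    _ = 1 := by rw [Matrix.mul_nonsing_inv N hdetN, Matrix.nonsing_inv_mul Nᴴ hdetNH, one_mul]
  have hkey : Nᴴ * n' - Mᴴ * m' = (2 * Complex.I) • k := by
    rw [hNH, hMH, hn', hm', hk]
    simp only [mul_add, add_mul, mul_sub, sub_mul, smul_mul_assoc, mul_smul_comm, smul_smul,
      Complex.I_mul_I, neg_one_smul, smul_sub, smul_add, two_mul, add_smul]
    abel
  have hOmH : ((2:ℂ) • ((M⁻¹ * B)ᴴ * k * (M⁻¹ * B)))ᴴ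
      = (2:ℂ) • ((M⁻¹ * B)ᴴ * k * (M⁻¹ * B)) := by
    simp [conjTranspose_smul, conjTranspose_mul, hkH, mul_assoc]
  refine ⟨hdetM, ?_, hOmH⟩
  -- main identity
  have t1 : N * M⁻¹ * M⁻¹ᴴ * (Nᴴ * n') = n' := by rw [← mul_assoc, hU, one_mul]
  have t2 : N * M⁻¹ * M⁻¹ᴴ * (Mᴴ * m') = N * M⁻¹ * m' := by
    calc N * M⁻¹ * M⁻¹ᴴ * (Mᴴ * m') = N * M⁻¹ * ((M⁻¹ᴴ * Mᴴ) * m') := by noncomm_ring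
    _ = N * M⁻¹ * m' := by rw [hPMH, one_mul]
  have h4 : n' - N * M⁻¹ * m' = (2 * Complex.I) • (N * M⁻¹ * M⁻¹ᴴ * k) := by
    rw [← t1, ← t2, ← mul_sub, hkey, mul_smul_comm]
  calc n' * M⁻¹ * B + N * (-(M⁻¹ * m' * M⁻¹)) * B
      = (n' - N * M⁻¹ * m') * (M⁻¹ * B) := by noncomm_ring
    _ = (2 * Complex.I) • (N * M⁻¹ * M⁻¹ᴴ * k) * (M⁻¹ * B) := by rw [h4]
    _ = (2 * Complex.I) • (N * M⁻¹ * M⁻¹ᴴ * k * (M⁻¹ * B)) := by rw [smul_mul_assoc]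
    _ = Complex.I • ((N * M⁻¹ * B) * ((2:ℂ) • ((M⁻¹ * B)ᴴ * k * (M⁻¹ * B)))) := by
        rw [conjTranspose_mul]
        have hc : (N * M⁻¹ * B) * (Bᴴ * M⁻¹ᴴ * k * (M⁻¹ * B))
            = N * M⁻¹ * M⁻¹ᴴ * k * (M⁻¹ * B) := by
          calc (N * M⁻¹ * B) * (Bᴴ * M⁻¹ᴴ * k * (M⁻¹ * B))
              = N * M⁻¹ * ((B * Bᴴ) * (M⁻¹ᴴ * k * (M⁻¹ * B))) := by noncomm_ring
            _ = N * M⁻¹ * M⁻¹ᴴ * k * (M⁻¹ * B) := by rw [hB2, one_mul]; noncomm_ring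
        rw [mul_smul_comm, hc, smul_smul]
        ring_nf

/-- Let `X, Z` solve the shooting system `X′ = Z`, `Z′ = (V − λI)X` on `[0,1]` with `V`
continuous symmetric, suppose the Lagrangian frame conditions hold for every `s`, and let
`𝔅̃` be a constant complex unitary matrix.  Then `W̃(s) = (X + iZ)(X − iZ)⁻¹𝔅̃` is
differentiable with `dW̃/ds = iW̃Ω̃`, where
`Ω̃ = 2((X − iZ)⁻¹𝔅̃)* [Xᵗ(V − λI)X − ZᵗZ] ((X − iZ)⁻¹𝔅̃)` is Hermitian. -/
theorem Wtilde_s_derivative (n : ℕ) (V : ℝ → Matrix (Fin n) (Fin n) ℝ) (lam : ℝ)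
    (hVcont : ∀ i j, Continuous fun x => V x i j)
    (hVsym : ∀ x, (V x)ᵀ = V x)
    (X Z : ℝ → Matrix (Fin n) (Fin n) ℝ)
    (hX : ∀ s ∈ Set.Icc (0:ℝ) 1, ∀ i j,
      HasDerivWithinAt (fun t => X t i j) (Z s i j) (Set.Icc (0:ℝ) 1) s)
    (hZ : ∀ s ∈ Set.Icc (0:ℝ) 1, ∀ i j,
      HasDerivWithinAt (fun t => Z t i j)
        (((V s - lam • (1 : Matrix (Fin n) (Fin n) ℝ)) * X s) i j) (Set.Icc (0:ℝ) 1) s)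
    (hlag : ∀ s ∈ Set.Icc (0:ℝ) 1,
      (X s)ᵀ * Z s = (Z s)ᵀ * X s ∧ IsUnit ((X s)ᵀ * X s + (Z s)ᵀ * Z s))
    (B : Matrix (Fin n) (Fin n) ℂ) (hB1 : Bᴴ * B = 1) (hB2 : B * Bᴴ = 1)
    (Xc Zc W Om : ℝ → Matrix (Fin n) (Fin n) ℂ)
    (hXc : ∀ s, Xc s = (X s).map Complex.ofReal)
    (hZc : ∀ s, Zc s = (Z s).map Complex.ofReal)
    (hW : ∀ s, W s = (Xc s + Complex.I • Zc s) * (Xc s - Complex.I • Zc s)⁻¹ * B)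
    (hOm : ∀ s, Om s = (2 : ℂ) •
      (((Xc s - Complex.I • Zc s)⁻¹ * B)ᴴ *
        (((X s)ᵀ * (V s - lam • (1 : Matrix (Fin n) (Fin n) ℝ)) * X s
          - (Z s)ᵀ * Z s).map Complex.ofReal) *
        ((Xc s - Complex.I • Zc s)⁻¹ * B))) :
    ∀ s ∈ Set.Icc (0:ℝ) 1,
      (∀ i j, HasDerivWithinAt (fun t => W t i j)
        ((Complex.I • (W s * Om s)) i j) (Set.Icc (0:ℝ) 1) s) ∧
      (Om s)ᴴ = Om s := by
  intro s hs
  set S := Set.Icc (0:ℝ) 1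
  -- ring hom facts
  have hmapmul : ∀ P Q : Matrix (Fin n) (Fin n) ℝ,
      (P * Q).map Complex.ofReal = P.map Complex.ofReal * Q.map Complex.ofReal := by
    intro P Q
    exact Matrix.map_mul (f := Complex.ofRealHom)
  have hmapT : ∀ P : Matrix (Fin n) (Fin n) ℝ,
      (Pᵀ).map Complex.ofReal = (P.map Complex.ofReal)ᵀ := fun P => rfl
  -- set up matrices at s
  set a : Matrix (Fin n) (Fin n) ℂ :=
    (V s - lam • (1 : Matrix (Fin n) (Fin n) ℝ)).map Complex.ofReal with ha
  set k : Matrix (Fin n) (Fin n) ℂ :=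
    ((X s)ᵀ * (V s - lam • (1 : Matrix (Fin n) (Fin n) ℝ)) * X s
      - (Z s)ᵀ * Z s).map Complex.ofReal with hkdef
  have hxH : (Xc s)ᴴ = (Xc s)ᵀ := by
    ext i j; simp [hXc, Matrix.conjTranspose_apply, Complex.conj_ofReal]
  have hzH : (Zc s)ᴴ = (Zc s)ᵀ := by
    ext i j; simp [hZc, Matrix.conjTranspose_apply, Complex.conj_ofReal]
  have h1 : (Xc s)ᵀ * Zc s = (Zc s)ᵀ * Xc s := by
    rw [hXc, hZc, ← hmapT, ← hmapT, ← hmapmul, ← hmapmul, (hlag s hs).1]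
  have hGu : IsUnit ((Xc s)ᵀ * (Xc s) + (Zc s)ᵀ * (Zc s)) := by
    have e : ((X s)ᵀ * X s + (Z s)ᵀ * Z s).map Complex.ofReal
        = (Xc s)ᵀ * (Xc s) + (Zc s)ᵀ * (Zc s) := by
      rw [Matrix.map_add _ Complex.ofReal_add, hmapmul, hmapmul, hmapT, hmapT, hXc, hZc]
    have h0 := (hlag s hs).2.map (Complex.ofRealHom.mapMatrix (m := Fin n))
    rw [RingHom.mapMatrix_apply] at h0
    rw [← e]
    exact h0
  have hk : k = (Xc s)ᵀ * (a * Xc s) - (Zc s)ᵀ * Zc s := by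
    rw [hkdef, hXc, hZc, ha, Matrix.map_sub _ Complex.ofReal_sub, hmapmul, hmapmul, hmapmul, hmapT, hmapT,
      mul_assoc]
  have hAsym : (V s - lam • (1 : Matrix (Fin n) (Fin n) ℝ))ᵀ
      = V s - lam • (1 : Matrix (Fin n) (Fin n) ℝ) := by
    rw [Matrix.transpose_sub, hVsym, Matrix.transpose_smul, Matrix.transpose_one]
  have hkH : kᴴ = k := by
    have hksymm : ((X s)ᵀ * (V s - lam • (1 : Matrix (Fin n) (Fin n) ℝ)) * X s
        - (Z s)ᵀ * Z s)ᵀ = (X s)ᵀ * (V s - lam • (1 : Matrix (Fin n) (Fin n) ℝ)) * X s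
        - (Z s)ᵀ * Z s := by
      rw [Matrix.transpose_sub, Matrix.transpose_mul, Matrix.transpose_mul,
        Matrix.transpose_mul, Matrix.transpose_transpose, hAsym, Matrix.transpose_transpose,
        mul_assoc]
    ext i j
    rw [hkdef]
    simp only [Matrix.conjTranspose_apply, Matrix.map_apply, Complex.conj_ofReal]
    conv_rhs => rw [← hksymm]
    simp [Matrix.transpose_apply, Complex.conj_ofReal]
  obtain ⟨hdetM, hmain, hOmH⟩ := key_algebra (Xc s) (Zc s) a k B hxH hzH h1 hGu hk hkH hB2
  -- derivatives
  have hXcd : ∀ i j, HasDerivWithinAt (fun t => Xc t i j) (Zc s i j) S s := by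
    intro i j
    have h2 := (Complex.ofRealCLM.hasFDerivAt).comp_hasDerivWithinAt s (hX s hs i j)
    simp only [Function.comp_def, Complex.ofRealCLM_apply] at h2
    have : (fun t => Xc t i j) = fun t => ((X t i j : ℝ) : ℂ) := by
      funext t; rw [hXc]; rfl
    rw [this, hZc]
    exact h2
  have hZcd : ∀ i j, HasDerivWithinAt (fun t => Zc t i j) ((a * Xc s) i j) S s := by
    intro i j
    have h2 := (Complex.ofRealCLM.hasFDerivAt).comp_hasDerivWithinAt s (hZ s hs i j)
    simp only [Function.comp_def, Complex.ofRealCLM_apply] at h2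
    have e1 : (fun t => Zc t i j) = fun t => ((Z t i j : ℝ) : ℂ) := by
      funext t; rw [hZc]; rfl
    have e2 : (((V s - lam • (1 : Matrix (Fin n) (Fin n) ℝ)) * X s) i j : ℂ)
        = (a * Xc s) i j := by
      rw [ha, hXc, ← hmapmul]; rfl
    rw [e1, ← e2]
    exact h2
  have hXcD : HasDerivWithinAt Xc (Zc s) S s := hasDerivWithinAt_of_entries hXcd
  have hZcD : HasDerivWithinAt Zc (a * Xc s) S s := hasDerivWithinAt_of_entries hZcd
  have hMD : HasDerivWithinAt (fun t => Xc t - Complex.I • Zc t)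
      (Zc s - Complex.I • (a * Xc s)) S s := hXcD.sub (hZcD.const_smul Complex.I)
  have hND : HasDerivWithinAt (fun t => Xc t + Complex.I • Zc t)
      (Zc s + Complex.I • (a * Xc s)) S s := hXcD.add (hZcD.const_smul Complex.I)
  have hMunit : IsUnit (Xc s - Complex.I • Zc s) :=
    (Matrix.isUnit_iff_isUnit_det _).mpr hdetM
  have hMinv := hasDerivWithinAt_matrix_inv hMD hMunit
  have hWD := (hND.mul hMinv).mul_const B
  have hWfun : W = fun t => (Xc t + Complex.I • Zc t) * (Xc t - Complex.I • Zc t)⁻¹ * B :=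
    funext hW
  have hWD' : HasDerivWithinAt W ((Complex.I • (W s * Om s))) S s := by
    rw [hWfun]
    refine hWD.congr_deriv ?_
    rw [hOm s, ← hkdef, ← hmain]
    noncomm_ring
  refine ⟨fun i j => entry_hasDerivWithinAt hWD' i j, ?_⟩
  rw [hOm s, ← hkdef]
  exact hOmH
end

section
/- Let W : ℝ → Mat_{n×n}(ℂ) be differentiable at τ₀, with W(τ) unitary for all τ in a neighborhood of τ₀, and suppose W′(τ₀) = iW(τ₀)Ω where Ω is Hermitian and negative definite. Let θ ∈ ℝ be such that e^{iθ} is not an eigenvalue of W(τ₀), and define A(τ) = i(e^{iθ}I − W(τ))^{−1}(e^{iθ}I + W(τ)) for τ near τ₀. Then A(τ₀) is Hermitian, A is differentiable at τ₀, and A′(τ₀) = ((e^{iθ}I − W(τ₀))^{−1})* (2Ω) (e^{iθ}I − W(τ₀))^{−1}; in particular A′(τ₀) is Hermitian and negative definite. -/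
open Matrix
open scoped ComplexOrder

attribute [local instance] Matrix.linftyOpNormedAddCommGroup Matrix.linftyOpNormedRing
  Matrix.linftyOpNormedAlgebra

section CayleyAux
variable {n : ℕ}

/-- Entrywise derivatives give a derivative of the matrix-valued function. -/
lemma aux_hasDerivAt_of_entries {f : ℝ → Matrix (Fin n) (Fin n) ℂ}
    {f' : Matrix (Fin n) (Fin n) ℂ} {x : ℝ}
    (h : ∀ i j, HasDerivAt (fun τ => f τ i j) (f' i j) x) :
    HasDerivAt f f' x := by
  have key : HasDerivAt (fun τ => ∑ i, ∑ j, (f τ i j) • single i j (1:ℂ))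
      (∑ i, ∑ j, (f' i j) • single i j (1:ℂ)) x := by
    refine HasDerivAt.fun_sum fun i _ => HasDerivAt.fun_sum fun j _ => ?_
    exact (h i j).smul_const _
  have e1 : ∀ (g : Matrix (Fin n) (Fin n) ℂ),
      ∑ i, ∑ j, (g i j) • single i j (1:ℂ) = g := by
    intro g
    conv_rhs => rw [matrix_eq_sum_single g]
    simp [smul_single]
  simp only [e1] at key
  exact key

/-- A derivative of a matrix-valued function gives entrywise derivatives. -/
lemma aux_entry_of_hasDerivAt {f : ℝ → Matrix (Fin n) (Fin n) ℂ}
    {f' : Matrix (Fin n) (Fin n) ℂ} {x : ℝ} (h : HasDerivAt f f' x) (i j : Fin n) :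
    HasDerivAt (fun τ => f τ i j) (f' i j) x := by
  haveI : FiniteDimensional ℝ (Matrix (Fin n) (Fin n) ℂ) := Module.Finite.trans ℂ _
  let L : Matrix (Fin n) (Fin n) ℂ →ₗ[ℝ] ℂ :=
    { toFun := fun M => M i j
      map_add' := fun _ _ => rfl
      map_smul' := fun _ _ => rfl }
  have hL := (LinearMap.toContinuousLinearMap L).hasFDerivAt (x := f x)
  have := (hL.comp x h.hasFDerivAt).hasDerivAt
  refine this.congr_deriv ?_
  change L ((1:ℝ) • f') = f' i j
  simp [L]
  rfl

/-- Derivative of the matrix inverse along a differentiable path, at a point where the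
matrix is invertible. -/
lemma aux_hasDerivAt_ring_inverse {M : ℝ → Matrix (Fin n) (Fin n) ℂ}
    {M' : Matrix (Fin n) (Fin n) ℂ} {x : ℝ} (hM : HasDerivAt M M' x) (hx : IsUnit (M x)) :
    HasDerivAt (fun τ => Ring.inverse (M τ))
      (-(Ring.inverse (M x) * M' * Ring.inverse (M x))) x := by
  haveI : FiniteDimensional ℝ (Matrix (Fin n) (Fin n) ℂ) := Module.Finite.trans ℂ _
  obtain ⟨u, hu⟩ := hx
  have h1 := hasFDerivAt_ringInverse (𝕜 := ℝ) (R := Matrix (Fin n) (Fin n) ℂ) u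
  rw [hu] at h1
  have h2 := (h1.comp x hM.hasFDerivAt).hasDerivAt
  have hinv : (↑u⁻¹ : Matrix (Fin n) (Fin n) ℂ) = Ring.inverse (M x) := by
    rw [← hu, Ring.inverse_unit]
  refine h2.congr_deriv ?_
  change -((↑u⁻¹ : Matrix (Fin n) (Fin n) ℂ) * ((1:ℝ) • M') * (↑u⁻¹ : Matrix (Fin n) (Fin n) ℂ)) = _
  simp [hinv]

/-- Conjugation by an invertible matrix preserves positive definiteness. -/
lemma aux_posDef_conj {N B : Matrix (Fin n) (Fin n) ℂ} (hN : N.PosDef) (hB : IsUnit B) :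
    (Bᴴ * N * B).PosDef := by
  have hdet : IsUnit B.det := (Matrix.isUnit_iff_isUnit_det _).mp hB
  refine Matrix.PosDef.of_dotProduct_mulVec_pos ?_ ?_
  · have h1 := hN.1
    simp only [Matrix.IsHermitian] at h1 ⊢
    rw [conjTranspose_mul, conjTranspose_mul, conjTranspose_conjTranspose, h1, mul_assoc]
  · intro x hx
    have hBx : B *ᵥ x ≠ 0 := by
      intro h0
      apply hx
      have h1 := congrArg (fun v => B⁻¹ *ᵥ v) h0
      simpa [Matrix.mulVec_mulVec, Matrix.nonsing_inv_mul _ hdet] using h1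
    have hpos := hN.dotProduct_mulVec_pos hBx
    have key : star x ⬝ᵥ (Bᴴ * N * B) *ᵥ x = star (B *ᵥ x) ⬝ᵥ N *ᵥ (B *ᵥ x) := by
      rw [Matrix.star_mulVec, ← Matrix.mulVec_mulVec, ← Matrix.mulVec_mulVec,
        Matrix.dotProduct_mulVec]
    rw [key]
    exact hpos

end CayleyAux

/-- Let `W(τ)` be a family of unitary matrices near `τ₀`, differentiable at `τ₀` with
`W′(τ₀) = iW(τ₀)Ω` for `Ω` Hermitian negative definite, and let `e^{iθ}` not be an
eigenvalue of `W(τ₀)`.  Then the Cayley transform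
`A(τ) = i(e^{iθ}I − W(τ))⁻¹(e^{iθ}I + W(τ))` is Hermitian at `τ₀`, differentiable at `τ₀`,
and `A′(τ₀) = ((e^{iθ}I − W(τ₀))⁻¹)* (2Ω) (e^{iθ}I − W(τ₀))⁻¹` is Hermitian and negative
definite. -/
theorem cayley_transform_clockwise (n : ℕ) (W : ℝ → Matrix (Fin n) (Fin n) ℂ)
    (τ₀ θ : ℝ) (Om : Matrix (Fin n) (Fin n) ℂ)
    (hunit : ∀ᶠ τ in nhds τ₀, (W τ)ᴴ * W τ = 1 ∧ W τ * (W τ)ᴴ = 1)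
    (hderiv : ∀ i j, HasDerivAt (fun τ => W τ i j) ((Complex.I • (W τ₀ * Om)) i j) τ₀)
    (hOm : Omᴴ = Om) (hneg : (-Om).PosDef)
    (heig : Complex.exp (θ * Complex.I) ∉ spectrum ℂ (W τ₀))
    (A : ℝ → Matrix (Fin n) (Fin n) ℂ)
    (hA : ∀ τ, A τ = Complex.I •
      ((Complex.exp (θ * Complex.I) • (1 : Matrix (Fin n) (Fin n) ℂ) - W τ)⁻¹ *
        (Complex.exp (θ * Complex.I) • (1 : Matrix (Fin n) (Fin n) ℂ) + W τ))) :
    (A τ₀)ᴴ = A τ₀ ∧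
    (∀ i j, HasDerivAt (fun τ => A τ i j)
      ((((Complex.exp (θ * Complex.I) • (1 : Matrix (Fin n) (Fin n) ℂ) - W τ₀)⁻¹)ᴴ *
        ((2 : ℂ) • Om) *
        (Complex.exp (θ * Complex.I) • (1 : Matrix (Fin n) (Fin n) ℂ) - W τ₀)⁻¹) i j) τ₀) ∧
    ((((Complex.exp (θ * Complex.I) • (1 : Matrix (Fin n) (Fin n) ℂ) - W τ₀)⁻¹)ᴴ *
        ((2 : ℂ) • Om) *
        (Complex.exp (θ * Complex.I) • (1 : Matrix (Fin n) (Fin n) ℂ) - W τ₀)⁻¹)ᴴ =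
      (((Complex.exp (θ * Complex.I) • (1 : Matrix (Fin n) (Fin n) ℂ) - W τ₀)⁻¹)ᴴ *
        ((2 : ℂ) • Om) *
        (Complex.exp (θ * Complex.I) • (1 : Matrix (Fin n) (Fin n) ℂ) - W τ₀)⁻¹)) ∧
    (-((((Complex.exp (θ * Complex.I) • (1 : Matrix (Fin n) (Fin n) ℂ) - W τ₀)⁻¹)ᴴ *
        ((2 : ℂ) • Om) *
        (Complex.exp (θ * Complex.I) • (1 : Matrix (Fin n) (Fin n) ℂ) - W τ₀)⁻¹))).PosDef := by
  set u : ℂ := Complex.exp (θ * Complex.I) with hu_def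
  set M₀ : Matrix (Fin n) (Fin n) ℂ := u • 1 - W τ₀ with hM₀
  have hu0 : u ≠ 0 := Complex.exp_ne_zero _
  have hstaru : star u = u⁻¹ := by
    rw [hu_def, Complex.star_def, ← Complex.exp_conj, ← Complex.exp_neg]
    congr 1
    simp [Complex.conj_I]
  have hMunit : IsUnit M₀ := by
    rw [spectrum.notMem_iff] at heig
    simpa [Algebra.algebraMap_eq_smul_one] using heig
  have hdet : IsUnit M₀.det := (Matrix.isUnit_iff_isUnit_det _).mp hMunit
  set B : Matrix (Fin n) (Fin n) ℂ := M₀⁻¹ with hB_def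
  have hMB : M₀ * B = 1 := Matrix.mul_nonsing_inv _ hdet
  have hBM : B * M₀ = 1 := Matrix.nonsing_inv_mul _ hdet
  have hBunit : IsUnit B := Matrix.isUnit_nonsing_inv_iff.mpr hMunit
  obtain ⟨hW1, hW2⟩ := hunit.self_of_nhds
  have key1 : M₀ᴴ = (-(star u)) • ((W τ₀)ᴴ * M₀) := by
    rw [hM₀, conjTranspose_sub, conjTranspose_smul, conjTranspose_one,
      mul_sub, mul_smul_comm, mul_one, hW1, smul_sub, smul_smul]
    have : -star u * u = -1 := by rw [hstaru]; field_simp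
    rw [this]; module
  have hBH : Bᴴ = (-u) • (B * W τ₀) := by
    rw [hB_def, Matrix.conjTranspose_nonsing_inv]
    refine Matrix.inv_eq_right_inv ?_
    rw [key1, Matrix.smul_mul, Matrix.mul_smul, smul_smul,
      mul_assoc, ← mul_assoc M₀, hMB, one_mul, hW1, hstaru]
    field_simp
    exact one_smul _ _
  have hBW : B * W τ₀ = u • B - 1 := by
    have : W τ₀ = u • 1 - M₀ := by rw [hM₀]; module
    rw [this, mul_sub, mul_smul_comm, mul_one, hBM]
  refine ⟨?_, ?_, ?_, ?_⟩
  · -- A τ₀ is Hermitian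
    have hA0 : A τ₀ = Complex.I • ((2 * u) • B - 1) := by
      rw [hA τ₀]
      congr 1
      rw [show Complex.exp (θ * Complex.I) • (1 : Matrix (Fin n) (Fin n) ℂ) - W τ₀ = M₀ from rfl]
      rw [← hB_def, mul_add, mul_smul_comm, mul_one, hBW]
      module
    rw [hA0, conjTranspose_smul, conjTranspose_sub, conjTranspose_smul, conjTranspose_one,
      hBH, hBW]
    rw [show star Complex.I = -Complex.I from by simp [Complex.star_def, Complex.conj_I]]
    rw [show star (2 * u) = 2 * u⁻¹ from by rw [star_mul']; simp [hstaru]]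
    match_scalars <;> field_simp <;> ring
  · -- differentiability with the stated derivative
    have hWd : HasDerivAt W (Complex.I • (W τ₀ * Om)) τ₀ := aux_hasDerivAt_of_entries hderiv
    have hMd : HasDerivAt (fun τ => u • (1 : Matrix (Fin n) (Fin n) ℂ) - W τ)
        (-(Complex.I • (W τ₀ * Om))) τ₀ := hWd.const_sub _
    have hinvd := aux_hasDerivAt_ring_inverse hMd hMunit
    rw [← hM₀, ← Matrix.nonsing_inv_eq_ringInverse, ← hB_def] at hinvd
    have hgd : HasDerivAt (fun τ => Complex.I •
          ((2 * u) • Ring.inverse (u • (1 : Matrix (Fin n) (Fin n) ℂ) - W τ) - 1))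
        (Complex.I • ((2 * u) • (-(B * -(Complex.I • (W τ₀ * Om)) * B)))) τ₀ := by
      have h1 := ((hinvd.const_smul (2 * u)).sub_const 1).const_smul Complex.I
      exact h1
    have hcont : ContinuousAt (fun τ => u • (1 : Matrix (Fin n) (Fin n) ℂ) - W τ) τ₀ :=
      hMd.continuousAt
    have hdetcont : ContinuousAt
        (fun τ => (u • (1 : Matrix (Fin n) (Fin n) ℂ) - W τ).det) τ₀ :=
      (Continuous.matrix_det continuous_id).continuousAt.comp hcont
    have hdet0 : M₀.det ≠ 0 := isUnit_iff_ne_zero.mp hdet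
    have hevne : ∀ᶠ τ in nhds τ₀, (u • (1 : Matrix (Fin n) (Fin n) ℂ) - W τ).det ≠ 0 :=
      hdetcont.eventually_ne hdet0
    have heqAg : A =ᶠ[nhds τ₀] (fun τ => Complex.I •
        ((2 * u) • Ring.inverse (u • (1 : Matrix (Fin n) (Fin n) ℂ) - W τ) - 1)) := by
      filter_upwards [hevne] with τ hτ
      have hdτ : IsUnit (u • (1 : Matrix (Fin n) (Fin n) ℂ) - W τ).det :=
        isUnit_iff_ne_zero.mpr hτ
      rw [hA τ]
      congr 1
      rw [← Matrix.nonsing_inv_eq_ringInverse]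
      have hsplit : u • (1 : Matrix (Fin n) (Fin n) ℂ) + W τ =
          (2 * u) • (1 : Matrix (Fin n) (Fin n) ℂ) - (u • 1 - W τ) := by module
      rw [hsplit, mul_sub, mul_smul_comm, mul_one, Matrix.nonsing_inv_mul _ hdτ]
    have hAd : HasDerivAt A
        (Complex.I • ((2 * u) • (-(B * -(Complex.I • (W τ₀ * Om)) * B)))) τ₀ :=
      heqAg.hasDerivAt_iff.mpr hgd
    have hval : Complex.I • ((2 * u) • (-(B * -(Complex.I • (W τ₀ * Om)) * B))) =
        Bᴴ * ((2 : ℂ) • Om) * B := by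
      rw [hBH]
      simp only [neg_neg, Matrix.mul_smul, Matrix.smul_mul, smul_smul, neg_smul, smul_neg,
        neg_mul, mul_neg, mul_assoc]
      match_scalars
      ring_nf
      simp [Complex.I_sq]
    rw [hval] at hAd
    exact fun i j => aux_entry_of_hasDerivAt hAd i j
  · -- the derivative is Hermitian
    rw [conjTranspose_mul, conjTranspose_mul, conjTranspose_conjTranspose,
      conjTranspose_smul, hOm, mul_assoc]
    congr 1
    simp
  · -- negative definiteness
    have hsplit : -(Bᴴ * ((2 : ℂ) • Om) * B) = Bᴴ * ((-Om) + (-Om)) * B := by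
      rw [two_smul]
      noncomm_ring
    rw [hsplit]
    exact aux_posDef_conj (hneg.add hneg) hBunit
end

section
/- Let X, Z be real n×n matrices satisfying the Lagrangian frame conditions (so X ± iZ are invertible over ℂ). Then: (i) for v ∈ ℂⁿ, (X − iZ)^{−1}(X + iZ)v = −v if and only if Xv = 0; (ii) if (X + iZ)(X − iZ)^{−1}v = −v, then w := (X − iZ)^{−1}v satisfies Xw = 0, and in that case for any real n×n matrix C one has ⟨(XᵗCX − ZᵗZ)w, w⟩_{ℂⁿ} = −‖Zw‖² ≤ 0. In particular, in the Dirichlet case the (−1)-eigenspace of W̃ = (X + iZ)(X − iZ)^{−1} corresponds to the kernel of X, and the crossing form matrix XᵗCX − ZᵗZ is negative semidefinite on this eigenspace. -/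
open Matrix

/-- Dirichlet-case crossing analysis: for a Lagrangian frame `(X; Z)`,
(i) `(X − iZ)⁻¹(X + iZ)v = −v` iff `Xv = 0`; (ii) if `(X + iZ)(X − iZ)⁻¹v = −v`, then
`w = (X − iZ)⁻¹v` satisfies `Xw = 0`, and for any real matrix `C` the crossing-form
quantity `⟨(XᵗCX − ZᵗZ)w, w⟩` equals `−‖Zw‖² ≤ 0`. -/
theorem dirichlet_crossing_form (n : ℕ) (X Z : Matrix (Fin n) (Fin n) ℝ)
    (hfr : Xᵀ * Z = Zᵀ * X) (hinv : IsUnit (Xᵀ * X + Zᵀ * Z))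
    (Xc Zc : Matrix (Fin n) (Fin n) ℂ)
    (hXc : Xc = X.map Complex.ofReal) (hZc : Zc = Z.map Complex.ofReal) :
    (∀ v : Fin n → ℂ,
      ((Xc - Complex.I • Zc)⁻¹ * (Xc + Complex.I • Zc)) *ᵥ v = -v ↔ Xc *ᵥ v = 0) ∧
    (∀ v : Fin n → ℂ,
      ((Xc + Complex.I • Zc) * (Xc - Complex.I • Zc)⁻¹) *ᵥ v = -v →
      Xc *ᵥ ((Xc - Complex.I • Zc)⁻¹ *ᵥ v) = 0 ∧
      ∀ C : Matrix (Fin n) (Fin n) ℝ,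
        star ((Xc - Complex.I • Zc)⁻¹ *ᵥ v) ⬝ᵥ
            (((Xᵀ * C * X - Zᵀ * Z).map Complex.ofReal) *ᵥ
              ((Xc - Complex.I • Zc)⁻¹ *ᵥ v)) =
          -(star (Zc *ᵥ ((Xc - Complex.I • Zc)⁻¹ *ᵥ v)) ⬝ᵥ
              (Zc *ᵥ ((Xc - Complex.I • Zc)⁻¹ *ᵥ v))) ∧
        (star ((Xc - Complex.I • Zc)⁻¹ *ᵥ v) ⬝ᵥ
            (((Xᵀ * C * X - Zᵀ * Z).map Complex.ofReal) *ᵥ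
              ((Xc - Complex.I • Zc)⁻¹ *ᵥ v))).im = 0 ∧
        (star ((Xc - Complex.I • Zc)⁻¹ *ᵥ v) ⬝ᵥ
            (((Xᵀ * C * X - Zᵀ * Z).map Complex.ofReal) *ᵥ
              ((Xc - Complex.I • Zc)⁻¹ *ᵥ v))).re ≤ 0) := by
  set A := Xc - Complex.I • Zc with hA
  set B := Xc + Complex.I • Zc with hB
  have cmul : ∀ M N : Matrix (Fin n) (Fin n) ℝ,
      (M * N).map Complex.ofReal = M.map Complex.ofReal * N.map Complex.ofReal := by
    intro M N; ext i j
    simp [Matrix.mul_apply, Matrix.map_apply]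
  -- frame relation over ℂ
  have hfrC : Xcᵀ * Zc = Zcᵀ * Xc := by
    rw [hXc, hZc, ← Matrix.transpose_map, ← Matrix.transpose_map, ← cmul, ← cmul, hfr]
  have hkey : Bᵀ * A = (Xᵀ * X + Zᵀ * Z).map Complex.ofReal := by
    have hrhs : (Xᵀ * X + Zᵀ * Z).map Complex.ofReal = Xcᵀ * Xc + Zcᵀ * Zc := by
      rw [hXc, hZc, Matrix.map_add _ Complex.ofReal_add, ← Matrix.transpose_map,
        ← Matrix.transpose_map, ← cmul, ← cmul]
    rw [hrhs, hB, hA, Matrix.transpose_add, Matrix.transpose_smul]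
    rw [Matrix.add_mul, Matrix.mul_sub, Matrix.mul_sub, Matrix.smul_mul,
      Matrix.mul_smul, Matrix.mul_smul, Matrix.smul_mul, hfrC]
    rw [smul_smul, Complex.I_mul_I, neg_one_smul]
    abel
  have hUmap : IsUnit ((Xᵀ * X + Zᵀ * Z).map Complex.ofReal) := by
    have := hinv.map (Complex.ofRealHom).mapMatrix
    exact this
  have hdet : IsUnit Bᵀ.det ∧ IsUnit A.det := by
    have := (Matrix.isUnit_iff_isUnit_det _).mp (hkey ▸ hUmap)
    rw [Matrix.det_mul] at this
    exact ⟨isUnit_of_mul_isUnit_left this, isUnit_of_mul_isUnit_right this⟩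
  have hAdet : IsUnit A.det := hdet.2
  have hAinv : A * A⁻¹ = 1 := Matrix.mul_nonsing_inv A hAdet
  have hAinv' : A⁻¹ * A = 1 := Matrix.nonsing_inv_mul A hAdet
  have hAB : A + B = Xc + Xc := by
    rw [hA, hB, sub_add_add_cancel]
  -- core kernel step
  have hker : ∀ v : Fin n → ℂ, B *ᵥ v = -(A *ᵥ v) → Xc *ᵥ v = 0 := by
    intro v h
    have h2 : (A + B) *ᵥ v = 0 := by
      rw [Matrix.add_mulVec, h]; simp
    rw [hAB, Matrix.add_mulVec] at h2
    have h3 : (2 : ℂ) • (Xc *ᵥ v) = 0 := by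
      rw [two_smul]; exact h2
    exact (smul_eq_zero.mp h3).resolve_left two_ne_zero
  constructor
  · intro v
    constructor
    · intro h
      apply hker
      have h2 := congrArg (fun u => A *ᵥ u) h
      simp only [Matrix.mulVec_mulVec, ← Matrix.mul_assoc, hAinv, Matrix.one_mul] at h2
      rw [h2]; simp [Matrix.mulVec_neg]
    · intro h
      have hBv : B *ᵥ v = A *ᵥ (-v) := by
        rw [hB, hA, Matrix.add_mulVec, Matrix.sub_mulVec, Matrix.smul_mulVec,
          Matrix.smul_mulVec]
        simp [Matrix.mulVec_neg, h]
      rw [← Matrix.mulVec_mulVec, hBv, Matrix.mulVec_mulVec, hAinv', Matrix.one_mulVec]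
  · intro v h
    have hAw : A *ᵥ (A⁻¹ *ᵥ v) = v := by
      rw [Matrix.mulVec_mulVec, hAinv, Matrix.one_mulVec]
    have hBw : B *ᵥ (A⁻¹ *ᵥ v) = -(A *ᵥ (A⁻¹ *ᵥ v)) := by
      rw [hAw, Matrix.mulVec_mulVec, h]
    have hXw : Xc *ᵥ (A⁻¹ *ᵥ v) = 0 := hker _ hBw
    refine ⟨hXw, fun C => ?_⟩
    set w := A⁻¹ *ᵥ v with hw
    -- crossing form
    have hMsplit : (Xᵀ * C * X - Zᵀ * Z).map Complex.ofReal =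
        Xcᵀ * (C.map Complex.ofReal) * Xc - Zcᵀ * Zc := by
      rw [hXc, hZc, Matrix.map_sub _ Complex.ofReal_sub, ← Matrix.transpose_map,
        ← Matrix.transpose_map, ← cmul, ← cmul, ← cmul]
    have hzero : (Xcᵀ * (C.map Complex.ofReal) * Xc) *ᵥ w = 0 := by
      rw [Matrix.mul_assoc, ← Matrix.mulVec_mulVec, ← Matrix.mulVec_mulVec, hXw]
      simp
    have hMw : ((Xᵀ * C * X - Zᵀ * Z).map Complex.ofReal) *ᵥ w =
        -(Zcᵀ *ᵥ (Zc *ᵥ w)) := by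
      rw [hMsplit, Matrix.sub_mulVec, hzero, zero_sub, ← Matrix.mulVec_mulVec]
    have hstarZ : star (Zc *ᵥ w) = Zc *ᵥ star w := by
      funext i
      simp only [Pi.star_apply, Matrix.mulVec, dotProduct, hZc, Matrix.map_apply]
      rw [star_sum]
      congr 1; funext j
      simp [Complex.star_def]
    have hmain : star w ⬝ᵥ (((Xᵀ * C * X - Zᵀ * Z).map Complex.ofReal) *ᵥ w) =
        -(star (Zc *ᵥ w) ⬝ᵥ (Zc *ᵥ w)) := by
      rw [hMw, dotProduct_neg, Matrix.dotProduct_mulVec, ← Matrix.mulVec_transpose,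
        Matrix.transpose_transpose, ← hstarZ]
    have husum : star (Zc *ᵥ w) ⬝ᵥ (Zc *ᵥ w) =
        ((∑ i, Complex.normSq ((Zc *ᵥ w) i) : ℝ) : ℂ) := by
      simp only [dotProduct, Pi.star_apply, Complex.star_def,
        ← Complex.normSq_eq_conj_mul_self]
      push_cast
      rfl
    refine ⟨hmain, ?_, ?_⟩
    · rw [hmain, husum]; simp
    · rw [hmain, husum]
      simp only [Complex.neg_re, Complex.ofReal_re, neg_nonpos]
      exact Finset.sum_nonneg fun i _ => Complex.normSq_nonneg _
end
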